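/- arXiv:1412.5849 — 9 statements merged into one kernel-verified Lean document; each statement's English description precedes it below -/
import Mathlib

section
/- Let G be a finite group of order at least 3. Then the rainbow connection number of the power graph Γ_G equals 3 if 1 ≤ |M_G| ≤ 2, and equals |M_G| if |M_G| ≥ 3. -/
/-- The power graph of a group `G`: distinct elements `x` and `y` are adjacent
iff one is a power of the other. -/
def powerGraph (G : Type*) [Group G] : SimpleGraph G where
  Adj x y := x ≠ y ∧ (x ∈ Subgroup.zpowers y ∨ y ∈ Subgroup.zpowers x)
  symm := ⟨fun x y h => ⟨h.1.symm, h.2.symm⟩⟩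
  loopless := ⟨fun x h => h.1 rfl⟩

/-- `ζ` is a rainbow `k`-coloring of `Γ`: every pair of vertices is joined by a
path whose edges receive pairwise distinct colors. -/
def IsRainbowColoring {V : Type*} (Γ : SimpleGraph V) {k : ℕ} (ζ : Sym2 V → Fin k) : Prop :=
  ∀ u v : V, ∃ p : Γ.Walk u v, p.IsPath ∧ (p.edges.map ζ).Nodup

/-- The rainbow connection number of `Γ`: the least `k` admitting a rainbow
`k`-coloring. -/
noncomputable def rainbowConnection {V : Type*} (Γ : SimpleGraph V) : ℕ :=
  sInf {k : ℕ | ∃ ζ : Sym2 V → Fin k, IsRainbowColoring Γ ζ}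

/-- An element `x` is a maximal involution if it has order 2 and the only
cyclic subgroup containing `x` is `⟨x⟩`. -/
def IsMaximalInvolution {G : Type*} [Group G] (x : G) : Prop :=
  orderOf x = 2 ∧ ∀ g : G, x ∈ Subgroup.zpowers g → Subgroup.zpowers g = Subgroup.zpowers x

set_option linter.unusedSectionVars false

section Aux
variable {G : Type*} [Group G] [Fintype G]

lemma mem_zpowers_two {x y : G} (hx : orderOf x = 2) (hy : y ∈ Subgroup.zpowers x) :
    y = 1 ∨ y = x := by
  rw [Subgroup.mem_zpowers_iff] at hy
  obtain ⟨k, rfl⟩ := hy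
  rw [← zpow_mod_orderOf, hx]
  have : k % (2:ℤ) = 0 ∨ k % (2:ℤ) = 1 := by omega
  rcases this with h | h <;> simp [h]

lemma maxInv_adj {x y : G} (hx : IsMaximalInvolution x)
    (h : (powerGraph G).Adj x y) : y = 1 := by
  obtain ⟨hne, hmem | hmem⟩ := h
  · have := hx.2 y hmem
    have hy : y ∈ Subgroup.zpowers x := this ▸ Subgroup.mem_zpowers y
    rcases mem_zpowers_two hx.1 hy with h | h
    · exact h
    · exact absurd h.symm hne
  · rcases mem_zpowers_two hx.1 hmem with h | h
    · exact h
    · exact absurd h.symm hne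

lemma adj_one {g : G} (hg : g ≠ 1) : (powerGraph G).Adj 1 g :=
  ⟨hg.symm.symm.symm, Or.inl (Subgroup.one_mem _)⟩

lemma conj_maxInv {G : Type*} [Group G] {x : G} (hx : IsMaximalInvolution x) (a : G) :
    IsMaximalInvolution (a * x * a⁻¹) := by
  constructor
  · have h := (MulAut.conj a).orderOf_eq x
    rw [MulAut.conj_apply] at h
    rw [h, hx.1]
  · intro g hg
    have hx' : x ∈ Subgroup.map (MulAut.conj a⁻¹).toMonoidHom (Subgroup.zpowers g) :=
      ⟨a * x * a⁻¹, hg, by simp [MulAut.conj_apply]; group⟩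
    rw [MonoidHom.map_zpowers] at hx'
    have h2 := hx.2 _ hx'
    have h3 := congrArg (Subgroup.map (MulAut.conj a).toMonoidHom) h2
    rw [MonoidHom.map_zpowers, MonoidHom.map_zpowers] at h3
    have e1 : (MulAut.conj a).toMonoidHom ((MulAut.conj a⁻¹).toMonoidHom g) = g := by
      simp [MulAut.conj_apply]; group
    have e2 : (MulAut.conj a).toMonoidHom x = a * x * a⁻¹ := by
      simp [MulAut.conj_apply]
    rw [e1, e2] at h3
    exact h3

end Aux

section Aux2
variable {G : Type*} [Group G] [Fintype G]

lemma maxInv_central {x : G} (hx : IsMaximalInvolution x)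
    (huniq : ∀ y : G, IsMaximalInvolution y → y = x) (a : G) : a * x = x * a := by
  have h := huniq _ (conj_maxInv hx a)
  have : a * x * a⁻¹ * a = x * a := by rw [h]
  simpa [mul_assoc] using this

lemma exists_second_involution (hcard : 3 ≤ Fintype.card G)
    {x : G} (hx : IsMaximalInvolution x)
    (hc : ∀ a : G, a * x = x * a) :
    ∃ t : G, orderOf t = 2 ∧ t ≠ x := by
  classical
  by_contra hno
  push_neg at hno
  have huniq2 : ∀ t : G, orderOf t = 2 → t = x := hno
  clear hno
  have hgex : ∃ g : G, 3 ≤ orderOf g := by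
    by_contra h3
    push_neg at h3
    have hall : ∀ g : G, g = 1 ∨ g = x := by
      intro g
      rcases eq_or_ne g 1 with h1 | h1
      · exact Or.inl h1
      · refine Or.inr (huniq2 g ?_)
        have h0 : orderOf g ≠ 0 := (orderOf_pos g).ne'
        have h1' : orderOf g ≠ 1 := by simpa [orderOf_eq_one_iff] using h1
        have := h3 g
        omega
    have hsub : (Finset.univ : Finset G) ⊆ {1, x} := by
      intro g _
      rcases hall g with h | h <;> simp [h]
    have := Finset.card_le_card hsub
    have h2 : ({1, x} : Finset G).card ≤ 2 := Finset.card_insert_le _ _ |>.trans (by simp)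
    rw [Finset.card_univ] at this
    omega
  obtain ⟨g, hg⟩ := hgex
  have hgx : g ∈ Subgroup.zpowers x → False := by
    intro hmem
    rcases mem_zpowers_two hx.1 hmem with h1 | h1 <;> rw [h1] at hg
    · simp at hg
    · rw [hx.1] at hg; omega
  rcases Nat.even_or_odd (orderOf g) with he | ho
  · have h2 : orderOf (g ^ (orderOf g / 2)) = 2 :=
      orderOf_pow_orderOf_div (orderOf_pos g).ne' he.two_dvd
    have hxg := huniq2 _ h2
    have hmem : x ∈ Subgroup.zpowers g := hxg ▸ Subgroup.npow_mem_zpowers g _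
    have heq := hx.2 g hmem
    exact hgx (heq ▸ Subgroup.mem_zpowers g)
  · have hcomm : Commute x g := (hc g).symm
    have hxgn : (x * g) ^ orderOf g = x := by
      rw [hcomm.mul_pow, pow_orderOf_eq_one g, mul_one, ← pow_mod_orderOf, hx.1,
        Nat.odd_iff.mp ho, pow_one]
    have hmem : x ∈ Subgroup.zpowers (x * g) := by
      have h := Subgroup.npow_mem_zpowers (x * g) (orderOf g)
      rwa [hxgn] at h
    have heq := hx.2 _ hmem
    have hmem2 : x * g ∈ Subgroup.zpowers x := heq ▸ Subgroup.mem_zpowers _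
    rcases mem_zpowers_two hx.1 hmem2 with h1 | h1
    · have hgi : g = x⁻¹ := (inv_eq_of_mul_eq_one_right h1).symm
      rw [hgi, orderOf_inv, hx.1] at hg; omega
    · have hg1 : g = 1 := mul_left_cancel (a := x) (by rw [h1, mul_one])
      rw [hg1] at hg; simp at hg

lemma fin_three_distinct {j : ℕ} (hj : j ≤ 2) {a b c : Fin j}
    (hab : a ≠ b) (hac : a ≠ c) (hbc : b ≠ c) : False := by
  have h := List.Nodup.length_le_card (l := [a, b, c]) (by simp [hab, hac, hbc])
  simp at h; omega

lemma fin_two_eq {j : ℕ} (hj : j ≤ 2) {a b c : Fin j}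
    (hac : a ≠ c) (hbc : b ≠ c) : a = b := by
  by_contra hab
  exact fin_three_distinct hj hab hac hbc

end Aux2

section Lower
variable {G : Type*} [Group G] [Fintype G]

lemma orderOf_two_ne_one {x : G} (hx : orderOf x = 2) : x ≠ 1 := by
  intro h; rw [h] at hx; simp at hx

lemma maxInv_first_edge {x v : G} (hx : IsMaximalInvolution x) (hv : v ≠ x)
    (p : (powerGraph G).Walk x v) : s(x, (1:G)) ∈ p.edges := by
  cases p with
  | nil => exact absurd rfl hv
  | cons h q =>
    have hw := maxInv_adj hx h
    subst hw
    rw [SimpleGraph.Walk.edges_cons]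
    exact List.mem_cons_self

lemma pendant_colors_ne {k : ℕ} {ζ : Sym2 G → Fin k}
    (hζ : IsRainbowColoring (powerGraph G) ζ)
    {x y : G} (hx : IsMaximalInvolution x) (hy : IsMaximalInvolution y) (hxy : x ≠ y) :
    ζ s(x, (1:G)) ≠ ζ s(y, (1:G)) := by
  obtain ⟨p, _, hnd⟩ := hζ x y
  have h1 : s(x, (1:G)) ∈ p.edges := maxInv_first_edge hx hxy.symm p
  have h2 : s(y, (1:G)) ∈ p.edges := by
    have := maxInv_first_edge hy hxy p.reverse
    rwa [SimpleGraph.Walk.edges_reverse, List.mem_reverse] at this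
  intro heq
  have hedge := List.inj_on_of_nodup_map hnd h1 h2 heq
  rw [Sym2.eq_iff] at hedge
  rcases hedge with ⟨h, _⟩ | ⟨h, _⟩
  · exact hxy h
  · exact orderOf_two_ne_one hx.1 h

lemma card_maxInv_le {k : ℕ} {ζ : Sym2 G → Fin k}
    (hζ : IsRainbowColoring (powerGraph G) ζ) :
    Nat.card {x : G // IsMaximalInvolution x} ≤ k := by
  have hinj : Function.Injective
      (fun x : {x : G // IsMaximalInvolution x} => ζ s(x.1, 1)) := by
    intro a b hab
    by_contra hne
    exact pendant_colors_ne hζ a.2 b.2 (fun h => hne (Subtype.ext h)) hab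
  calc Nat.card {x : G // IsMaximalInvolution x} ≤ Nat.card (Fin k) :=
        Nat.card_le_card_of_injective _ hinj
    _ = k := by simp

lemma forced_two_path {k : ℕ} (hk : k ≤ 2) {ζ : Sym2 G → Fin k}
    (hζ : IsRainbowColoring (powerGraph G) ζ) {x v : G} (hx : IsMaximalInvolution x)
    (hv1 : v ≠ 1) (hvx : v ≠ x) : ζ s((1:G), v) ≠ ζ s(x, (1:G)) := by
  obtain ⟨p, hp, hnd⟩ := hζ x v
  cases p with
  | nil => exact absurd rfl hvx
  | cons h q =>
    have hw := maxInv_adj hx h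
    subst hw
    cases q with
    | nil => exact absurd rfl hv1
    | cons h2 r =>
      cases r with
      | nil =>
        simp only [SimpleGraph.Walk.edges_cons, SimpleGraph.Walk.edges_nil,
          List.map_cons, List.map_nil, List.nodup_cons] at hnd
        intro heq
        exact hnd.1 (by simpa using heq.symm)
      | cons h3 r2 =>
        have hlen := List.Nodup.length_le_card hnd
        simp only [List.length_map, SimpleGraph.Walk.edges_cons, List.length_cons,
          Fintype.card_fin] at hlen
        omega

lemma exists_fourth (hcard : 4 ≤ Fintype.card G) (x1 x2 : G) :
    ∃ y : G, y ≠ 1 ∧ y ≠ x1 ∧ y ≠ x2 := by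
  classical
  by_contra hall
  push_neg at hall
  have hsub : (Finset.univ : Finset G) ⊆ {1, x1, x2} := by
    intro g _
    simp only [Finset.mem_insert, Finset.mem_singleton]
    rcases eq_or_ne g 1 with h | h
    · exact Or.inl h
    rcases eq_or_ne g x1 with h1 | h1
    · exact Or.inr (Or.inl h1)
    · exact Or.inr (Or.inr (hall g h h1))
  have h1 := Finset.card_le_card hsub
  rw [Finset.card_univ] at h1
  have h2 : ({1, x1, x2} : Finset G).card ≤ 3 := by
    refine le_trans (Finset.card_insert_le _ _) ?_
    have h3 : ({x1, x2} : Finset G).card ≤ 2 := by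
      refine le_trans (Finset.card_insert_le _ _) ?_
      simp
    omega
  omega

end Lower

section Lower2
variable {G : Type*} [Group G] [Fintype G]

lemma lower3_m2 {k : ℕ} (hk : k ≤ 2) {ζ : Sym2 G → Fin k}
    (hζ : IsRainbowColoring (powerGraph G) ζ) (hcard : 3 ≤ Fintype.card G)
    {x1 x2 : G} (h1 : IsMaximalInvolution x1) (h2 : IsMaximalInvolution x2)
    (h12 : x1 ≠ x2) : False := by
  have hdvd : 2 ∣ Fintype.card G := h1.1 ▸ orderOf_dvd_card
  have h4 : 4 ≤ Fintype.card G := by omega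
  obtain ⟨y, hy1, hyx1, hyx2⟩ := exists_fourth h4 x1 x2
  have c1 := forced_two_path hk hζ h1 hy1 hyx1
  have c2 := forced_two_path hk hζ h2 hy1 hyx2
  have c3 := pendant_colors_ne hζ h1 h2 h12
  exact fin_three_distinct hk c3 c1.symm c2.symm

lemma lower3_m1 {k : ℕ} (hk : k ≤ 2) {ζ : Sym2 G → Fin k}
    (hζ : IsRainbowColoring (powerGraph G) ζ) (hcard : 3 ≤ Fintype.card G)
    {x : G} (hx : IsMaximalInvolution x)
    (huniq : ∀ y : G, IsMaximalInvolution y → y = x) : False := by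
  have hc := maxInv_central hx huniq
  obtain ⟨t, ht2, htx⟩ := exists_second_involution hcard hx hc
  have ht1 : t ≠ 1 := orderOf_two_ne_one ht2
  have hx1 : x ≠ 1 := orderOf_two_ne_one hx.1
  have hxx : x * x = 1 := by
    have := pow_orderOf_eq_one x; rwa [hx.1, pow_two] at this
  have hu1 : x * t ≠ 1 := by
    intro h
    have : t = x⁻¹ := (inv_eq_of_mul_eq_one_right h).symm
    rw [this, inv_eq_of_mul_eq_one_right hxx] at htx
    exact htx rfl
  have hu2 : orderOf (x * t) = 2 := by
    have hcomm : Commute x t := (hc t).symm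
    have hsq : (x * t) ^ 2 = 1 := by
      rw [hcomm.mul_pow, pow_two, pow_two, hxx]
      have := pow_orderOf_eq_one t; rw [ht2, pow_two] at this
      rw [this, mul_one]
    exact orderOf_eq_prime hsq hu1
  have hux : x * t ≠ x := by
    intro h
    exact ht1 (mul_left_cancel (a := x) (by rw [h, mul_one]))
  have hut : x * t ≠ t := by
    intro h
    exact hx1 (mul_right_cancel (b := t) (by rw [h, one_mul]))
  -- forced colors
  have c1 := forced_two_path hk hζ hx ht1 htx
  have c2 := forced_two_path hk hζ hx hu1 hux
  have ceq : ζ s((1:G), t) = ζ s((1:G), x * t) := fin_two_eq hk c1 c2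
  -- t and x*t are not adjacent
  have hnadj : ¬ (powerGraph G).Adj t (x * t) := by
    rintro ⟨hne, hmem | hmem⟩
    · rcases mem_zpowers_two hu2 hmem with h | h
      · exact ht1 h
      · exact hne h
    · rcases mem_zpowers_two ht2 hmem with h | h
      · exact hu1 h
      · exact hut h
  obtain ⟨u, hu⟩ : ∃ u : G, u = x * t := ⟨_, rfl⟩
  rw [← hu] at hu1 hu2 hux hut c2 ceq hnadj
  obtain ⟨p, hp, hnd⟩ := hζ t u
  cases p with
  | nil => exact hut (hu ▸ rfl)
  | cons h q =>
    rename_i w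
    cases q with
    | nil => exact hnadj h
    | cons h2 r =>
      cases r with
      | nil =>
        -- t - w - (x*t) : show w = 1
        have hw1 : w = 1 := by
          rcases h.2 with hm | hm
          · rcases h2.2 with hm2 | hm2
            · -- t ∈ zpowers w, w ∈ zpowers (x*t)
              rcases mem_zpowers_two hu2 hm2 with hh | hh
              · exact hh
              · exact absurd hh h2.1
            · -- t ∈ zpowers w, x*t ∈ zpowers w : x ∈ zpowers w
              have hxw : x ∈ Subgroup.zpowers w := by
                have hmm := mul_mem hm2 (inv_mem hm)
                rwa [hu, mul_assoc, mul_inv_cancel, mul_one] at hmm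
              have heq := hx.2 w hxw
              have hwm : w ∈ Subgroup.zpowers x := heq ▸ Subgroup.mem_zpowers w
              rcases mem_zpowers_two hx.1 hwm with hh | hh
              · exact hh
              · -- w = x : then t ∈ zpowers x
                rw [hh] at hm
                rcases mem_zpowers_two hx.1 hm with h3 | h3
                · exact absurd h3 ht1
                · exact absurd h3 htx
          · rcases mem_zpowers_two ht2 hm with hh | hh
            · exact hh
            · exact absurd hh.symm h.1
        subst hw1
        simp only [SimpleGraph.Walk.edges_cons, SimpleGraph.Walk.edges_nil,
          List.map_cons, List.map_nil, List.nodup_cons] at hnd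
        apply hnd.1
        simp only [List.mem_singleton]
        rw [Sym2.eq_swap] at ceq
        exact ceq
      | cons h3 r2 =>
        have hlen := List.Nodup.length_le_card hnd
        simp only [List.length_map, SimpleGraph.Walk.edges_cons, List.length_cons,
          Fintype.card_fin] at hlen
        omega

end Lower2

section Paths
variable {V : Type*} {Γ : SimpleGraph V} {k : ℕ}

lemma exists_path1 (ζ : Sym2 V → Fin k) {a b : V} (h : Γ.Adj a b) :
    ∃ p : Γ.Walk a b, p.IsPath ∧ (p.edges.map ζ).Nodup := by
  refine ⟨SimpleGraph.Walk.cons h SimpleGraph.Walk.nil, ?_, by simp⟩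
  simp [SimpleGraph.Walk.isPath_def, h.ne]

lemma exists_path2 (ζ : Sym2 V → Fin k) {a b c : V} (h1 : Γ.Adj a b) (h2 : Γ.Adj b c)
    (hac : a ≠ c) (hcol : ζ s(a, b) ≠ ζ s(b, c)) :
    ∃ p : Γ.Walk a c, p.IsPath ∧ (p.edges.map ζ).Nodup := by
  refine ⟨SimpleGraph.Walk.cons h1 (SimpleGraph.Walk.cons h2 SimpleGraph.Walk.nil), ?_, ?_⟩
  · simp [SimpleGraph.Walk.isPath_def, h1.ne, h2.ne, hac]
  · simp [hcol]

lemma exists_path3 (ζ : Sym2 V → Fin k) {a b c d : V} (h1 : Γ.Adj a b) (h2 : Γ.Adj b c)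
    (h3 : Γ.Adj c d) (hac : a ≠ c) (had : a ≠ d) (hbd : b ≠ d)
    (hc12 : ζ s(a, b) ≠ ζ s(b, c)) (hc13 : ζ s(a, b) ≠ ζ s(c, d))
    (hc23 : ζ s(b, c) ≠ ζ s(c, d)) :
    ∃ p : Γ.Walk a d, p.IsPath ∧ (p.edges.map ζ).Nodup := by
  refine ⟨SimpleGraph.Walk.cons h1 (SimpleGraph.Walk.cons h2
    (SimpleGraph.Walk.cons h3 SimpleGraph.Walk.nil)), ?_, ?_⟩
  · simp [SimpleGraph.Walk.isPath_def, h1.ne, h2.ne, h3.ne, hac, had, hbd]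
  · simp [hc12, hc13, hc23]

end Paths

lemma exists_rainbow {G : Type*} [Group G] [Fintype G]
    (k : ℕ) (hk3 : 3 ≤ k)
    (hkm : Nat.card {x : G // IsMaximalInvolution x} ≤ k) :
    ∃ ζ : Sym2 G → Fin k, IsRainbowColoring (powerGraph G) ζ := by
  classical
  obtain ⟨eqv⟩ : Nonempty ({x : G // IsMaximalInvolution x}
      ≃ Fin (Nat.card {x : G // IsMaximalInvolution x})) := ⟨Finite.equivFin _⟩
  set ε := Fintype.equivFin G with hε
  set c0 : Fin k := ⟨0, by omega⟩ with hc0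
  set c1 : Fin k := ⟨1, by omega⟩ with hc1
  set c2 : Fin k := ⟨2, by omega⟩ with hc2
  have h01 : c0 ≠ c1 := by simp [hc0, hc1, Fin.ext_iff]
  have h02 : c0 ≠ c2 := by simp [hc0, hc2, Fin.ext_iff]
  have h12 : c1 ≠ c2 := by simp [hc1, hc2, Fin.ext_iff]
  set basec : G → Fin k := fun w => if (ε w : ℕ) < (ε w⁻¹ : ℕ) then c0 else c1 with hbasec
  have hbase01 : ∀ w : G, basec w = c0 ∨ basec w = c1 := by
    intro w
    by_cases h : (ε w : ℕ) < (ε w⁻¹ : ℕ)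
    · left; simp only [hbasec]; rw [if_pos h]
    · right; simp only [hbasec]; rw [if_neg h]
  have hbase_inv : ∀ w : G, w⁻¹ ≠ w → basec w⁻¹ ≠ basec w := by
    intro w hw
    have hne : (ε w : ℕ) ≠ (ε w⁻¹ : ℕ) := by
      intro h
      exact hw (ε.injective (Fin.ext h)).symm
    by_cases h : (ε w : ℕ) < (ε w⁻¹ : ℕ)
    · have h' : ¬ ((ε w⁻¹ : ℕ) < (ε w⁻¹⁻¹ : ℕ)) := by rw [inv_inv]; omega
      simp only [hbasec, if_pos h, if_neg h']
      exact h01.symm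
    · have h' : (ε w⁻¹ : ℕ) < (ε w⁻¹⁻¹ : ℕ) := by rw [inv_inv]; omega
      simp only [hbasec, if_pos h', if_neg h]
      exact h01
  set q : G → G := fun u => if 3 ≤ orderOf u then u⁻¹
      else if h : ∃ g : G, u ∈ Subgroup.zpowers g ∧ Subgroup.zpowers g ≠ Subgroup.zpowers u
        then h.choose else 1 with hqdef
  set c : G → Fin k := fun u => if 3 ≤ orderOf u then basec u
      else if basec (q u) = c0 then c1 else c0 with hcdef
  have hc01 : ∀ u : G, c u = c0 ∨ c u = c1 := by
    intro u
    rw [hcdef]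
    by_cases h : 3 ≤ orderOf u
    · simp only [if_pos h]; exact hbase01 u
    · simp only [if_neg h]
      by_cases h' : basec (q u) = c0 <;> simp [h']
  have hcnot2 : ∀ u : G, c u ≠ c2 := by
    intro u
    rcases hc01 u with h | h <;> rw [h]
    exacts [h02, h12]
  have hmain : ∀ u : G, u ≠ 1 → ¬ IsMaximalInvolution u →
      u ∈ Subgroup.zpowers (q u) ∧ q u ≠ u ∧ q u ≠ 1 ∧ ¬ IsMaximalInvolution (q u)
        ∧ c (q u) ≠ c u := by
    intro u hu1 hum
    by_cases h3 : 3 ≤ orderOf u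
    · have hq3 : q u = u⁻¹ := by rw [hqdef]; simp [h3]
      have hinv_ne : u⁻¹ ≠ u := by
        intro h
        have h2 : u ^ 2 = 1 := by
          rw [pow_two]; nth_rewrite 1 [← h]; rw [inv_mul_cancel]
        have := orderOf_dvd_of_pow_eq_one h2
        have := Nat.le_of_dvd (by omega) this
        omega
      have hord_inv : orderOf u⁻¹ = orderOf u := orderOf_inv u
      refine ⟨?_, ?_, ?_, ?_, ?_⟩
      · rw [hq3]
        exact Subgroup.mem_zpowers_iff.mpr ⟨-1, by simp⟩
      · rw [hq3]; exact hinv_ne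
      · rw [hq3]; simp [hu1]
      · rw [hq3]
        intro hmax
        rw [hmax.1] at hord_inv
        omega
      · rw [hq3]
        have hcu : c u = basec u := by rw [hcdef]; simp [h3]
        have hcqu : c u⁻¹ = basec u⁻¹ := by
          rw [hcdef]
          simp [hord_inv, h3]
        rw [hcu, hcqu]
        exact hbase_inv u hinv_ne
    · have hord : orderOf u = 2 := by
        have h0 : orderOf u ≠ 0 := (orderOf_pos u).ne'
        have h1 : orderOf u ≠ 1 := by simpa [orderOf_eq_one_iff] using hu1
        omega
      have hex : ∃ g : G, u ∈ Subgroup.zpowers g ∧ Subgroup.zpowers g ≠ Subgroup.zpowers u := by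
        by_contra hno
        push_neg at hno
        exact hum ⟨hord, fun g hg => by
          by_contra hne
          exact hne (hno g hg)⟩
      have hq3 : q u = hex.choose := by rw [hqdef]; simp [h3]; rw [dif_pos hex]
      obtain ⟨hmem, hzne⟩ := hex.choose_spec
      rw [← hq3] at hmem hzne
      have hqu1 : q u ≠ 1 := by
        intro h
        rw [h] at hmem
        simp [Subgroup.zpowers_one_eq_bot] at hmem
        exact hu1 hmem
      have hquu : q u ≠ u := by
        intro h
        rw [h] at hzne
        exact hzne rfl
      have hord_q : 3 ≤ orderOf (q u) := by
        have h0 : orderOf (q u) ≠ 0 := (orderOf_pos _).ne'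
        have h1 : orderOf (q u) ≠ 1 := by simpa [orderOf_eq_one_iff] using hqu1
        have h2 : orderOf (q u) ≠ 2 := by
          intro h2
          rcases mem_zpowers_two h2 hmem with h | h
          · exact hu1 h
          · exact hquu h.symm
        omega
      refine ⟨hmem, hquu, hqu1, ?_, ?_⟩
      · intro hmax
        rw [hmax.1] at hord_q
        omega
      · have hcqu : c (q u) = basec (q u) := by rw [hcdef]; simp [hord_q]
        have hcu : c u = if basec (q u) = c0 then c1 else c0 := by
          rw [hcdef]; simp [h3]
        rw [hcqu, hcu]
        by_cases h' : basec (q u) = c0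
        · rw [if_pos h', h']; exact h01
        · rw [if_neg h']; exact h' 
  -- the coloring
  set hcol : G → Fin k := fun x =>
    if hx : IsMaximalInvolution x then Fin.castLE hkm (eqv ⟨x, hx⟩) else c x with hhcol
  have hcol_nonmax : ∀ u : G, ¬ IsMaximalInvolution u → hcol u = c u := by
    intro u hu; rw [hhcol]; simp [hu]
  have hcol_max_ne : ∀ x y : G, IsMaximalInvolution x → IsMaximalInvolution y → x ≠ y →
      hcol x ≠ hcol y := by
    intro x y hx hy hxy heq
    rw [hhcol] at heq
    simp only [dif_pos hx, dif_pos hy] at heq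
    have := eqv.injective (Fin.castLE_injective hkm heq)
    exact hxy (congrArg Subtype.val this)
  have hsym : ∀ a b : G,
      (if a = 1 then hcol b else if b = 1 then hcol a else c2)
      = (if b = 1 then hcol a else if a = 1 then hcol b else c2) := by
    intro a b
    by_cases ha : a = 1 <;> by_cases hb : b = 1 <;> simp [ha, hb]
  refine ⟨Sym2.lift ⟨fun a b => if a = 1 then hcol b else if b = 1 then hcol a else c2,
    hsym⟩, ?_⟩
  set ζ : Sym2 G → Fin k := Sym2.lift ⟨fun a b =>
    if a = 1 then hcol b else if b = 1 then hcol a else c2, hsym⟩ with hζdef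
  have hζ1 : ∀ g : G, ζ s((1:G), g) = hcol g := by
    intro g; rw [hζdef, Sym2.lift_mk]; simp
  have hζ1' : ∀ g : G, ζ s(g, (1:G)) = hcol g := by
    intro g; rw [Sym2.eq_swap]; exact hζ1 g
  have hζ2 : ∀ a b : G, a ≠ 1 → b ≠ 1 → ζ s(a, b) = c2 := by
    intro a b ha hb; rw [hζdef, Sym2.lift_mk]; simp [ha, hb]
  intro u v
  by_cases huv : u = v
  · subst huv
    exact ⟨SimpleGraph.Walk.nil, by simp, by simp⟩
  by_cases hadj : (powerGraph G).Adj u v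
  · exact exists_path1 ζ hadj
  have hu1 : u ≠ 1 := by
    intro h; subst h; exact hadj (adj_one (Ne.symm huv))
  have hv1 : v ≠ 1 := by
    intro h; subst h; exact hadj ((adj_one hu1).symm)
  have hadj_u1 : (powerGraph G).Adj u 1 := (adj_one hu1).symm
  have hadj_1v : (powerGraph G).Adj (1:G) v := adj_one hv1
  by_cases hum : IsMaximalInvolution u <;> by_cases hvm : IsMaximalInvolution v
  · -- both maximal
    refine exists_path2 ζ hadj_u1 hadj_1v huv ?_
    rw [hζ1', hζ1]
    exact hcol_max_ne u v hum hvm huv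
  · -- u maximal, v not
    obtain ⟨hmem, hqne, hq1, hqm, hqc⟩ := hmain v hv1 hvm
    by_cases hcc : hcol u = c v
    · refine exists_path3 ζ hadj_u1 (adj_one hq1) ⟨hqne, Or.inr hmem⟩
        (fun h => hqm (h ▸ hum)) huv (Ne.symm hv1) ?_ ?_ ?_
      · rw [hζ1', hζ1, hcol_nonmax _ hqm, hcc]
        exact (hqc).symm
      · rw [hζ1', hζ2 _ _ hq1 hv1, hcc]
        exact hcnot2 v
      · rw [hζ1, hζ2 _ _ hq1 hv1, hcol_nonmax _ hqm]
        exact hcnot2 _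
    · refine exists_path2 ζ hadj_u1 hadj_1v huv ?_
      rw [hζ1', hζ1, hcol_nonmax _ hvm]
      exact hcc
  · -- v maximal, u not
    obtain ⟨hmem, hqne, hq1, hqm, hqc⟩ := hmain u hu1 hum
    by_cases hcc : hcol v = c u
    · refine exists_path3 ζ
        (SimpleGraph.Adj.symm (⟨hqne, Or.inr hmem⟩ : (powerGraph G).Adj (q u) u))
        (adj_one hq1).symm hadj_1v hu1 huv (fun h => hqm (h ▸ hvm)) ?_ ?_ ?_
      · rw [hζ2 _ _ hu1 hq1, hζ1', hcol_nonmax _ hqm]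
        exact fun h => hcnot2 _ h.symm
      · rw [hζ2 _ _ hu1 hq1, hζ1, hcc]
        exact fun h => hcnot2 _ h.symm
      · rw [hζ1', hζ1, hcol_nonmax _ hqm, hcc]
        exact hqc
    · refine exists_path2 ζ hadj_u1 hadj_1v huv ?_
      rw [hζ1', hζ1, hcol_nonmax _ hum]
      exact fun h => hcc h.symm
  · -- both nonmaximal
    obtain ⟨hmem, hqne, hq1, hqm, hqc⟩ := hmain u hu1 hum
    by_cases hcc : c u = c v
    · refine exists_path3 ζ
        (SimpleGraph.Adj.symm (⟨hqne, Or.inr hmem⟩ : (powerGraph G).Adj (q u) u))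
        (adj_one hq1).symm hadj_1v hu1 huv
        (fun h => hadj (⟨huv, Or.inl (h ▸ hmem)⟩ : (powerGraph G).Adj u v)) ?_ ?_ ?_
      · rw [hζ2 _ _ hu1 hq1, hζ1', hcol_nonmax _ hqm]
        exact fun h => hcnot2 _ h.symm
      · rw [hζ2 _ _ hu1 hq1, hζ1, hcol_nonmax _ hvm]
        exact fun h => hcnot2 _ h.symm
      · rw [hζ1', hζ1, hcol_nonmax _ hqm, hcol_nonmax _ hvm, ← hcc]
        exact hqc
    · refine exists_path2 ζ hadj_u1 hadj_1v huv ?_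
      rw [hζ1', hζ1, hcol_nonmax _ hum, hcol_nonmax _ hvm]
      exact hcc

theorem rc_powerGraph_of_maximalInvolutions_nonempty
    (G : Type*) [Group G] [Fintype G] (hG : 3 ≤ Fintype.card G) :
    (1 ≤ Nat.card {x : G // IsMaximalInvolution x} ∧
        Nat.card {x : G // IsMaximalInvolution x} ≤ 2 →
      rainbowConnection (powerGraph G) = 3) ∧
    (3 ≤ Nat.card {x : G // IsMaximalInvolution x} →
      rainbowConnection (powerGraph G) = Nat.card {x : G // IsMaximalInvolution x}) := by

  classical
  constructor
  · rintro ⟨hm1, hm2⟩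
    have hub : 3 ∈ {k : ℕ | ∃ ζ : Sym2 G → Fin k, IsRainbowColoring (powerGraph G) ζ} :=
      exists_rainbow 3 le_rfl (by omega)
    refine le_antisymm (Nat.sInf_le hub) (le_csInf ⟨3, hub⟩ ?_)
    rintro j ⟨ζ, hζ⟩
    by_contra hj
    push_neg at hj
    have hk : j ≤ 2 := by omega
    rcases Nat.lt_or_ge (Nat.card {x : G // IsMaximalInvolution x}) 2 with h | h
    · have hm : Nat.card {x : G // IsMaximalInvolution x} = 1 := by omega
      obtain ⟨hsub, ⟨a⟩⟩ := Nat.card_eq_one_iff_unique.mp hm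
      exact lower3_m1 hk hζ hG a.2
        (fun y hy => congrArg Subtype.val (@Subsingleton.elim _ hsub ⟨y, hy⟩ a))
    · have hnt : Nontrivial {x : G // IsMaximalInvolution x} :=
        (Finite.one_lt_card_iff_nontrivial).mp (by omega)
      obtain ⟨a, b, hab⟩ := hnt.exists_pair_ne
      exact lower3_m2 hk hζ hG a.2 b.2 (fun hh => hab (Subtype.ext hh))
  · intro hm3
    have hub : Nat.card {x : G // IsMaximalInvolution x}
        ∈ {k : ℕ | ∃ ζ : Sym2 G → Fin k, IsRainbowColoring (powerGraph G) ζ} :=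
      exists_rainbow _ hm3 le_rfl
    refine le_antisymm (Nat.sInf_le hub) (le_csInf ⟨_, hub⟩ ?_)
    rintro j ⟨ζ, hζ⟩
    exact card_maxInv_le hζ
end

section
/- For every finite group G, the rainbow connection number of the power graph Γ_G is at least |M_G|, the number of maximal involutions of G. -/
open SimpleGraph Subgroup

lemma mem_zpowers_of_involution {G : Type*} [Group G] {x w : G}
    (hx2 : orderOf x = 2) (hw : w ∈ zpowers x) : w = 1 ∨ w = x := by
  obtain ⟨n, rfl⟩ := hw
  show x ^ n = 1 ∨ x ^ n = x
  rw [← zpow_mod_orderOf, hx2]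
  rcases Int.emod_two_eq n with h | h <;> push_cast <;> rw [h] <;> simp

lemma adj_maximalInvolution_eq_one {G : Type*} [Group G] {x w : G}
    (hx : IsMaximalInvolution x) (h : (powerGraph G).Adj x w) : w = 1 := by
  obtain ⟨hne, hmem⟩ := h
  have hw : w ∈ zpowers x := by
    rcases hmem with h1 | h2
    · rw [← hx.2 w h1]; exact mem_zpowers w
    · exact h2
  rcases mem_zpowers_of_involution hx.1 hw with h | h
  · exact h
  · exact absurd h.symm hne

lemma edge_mem_of_walk {G : Type*} [Group G] {x y : G}
    (hx : IsMaximalInvolution x) (hxy : x ≠ y) (p : (powerGraph G).Walk x y) :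
    s(x, 1) ∈ p.edges := by
  cases p with
  | nil => exact absurd rfl hxy
  | cons h q =>
    rw [SimpleGraph.Walk.edges_cons]
    have := adj_maximalInvolution_eq_one hx h
    subst this
    exact List.mem_cons_self

theorem card_maximalInvolutions_le_rc_powerGraph
    (G : Type*) [Group G] [Fintype G] :
    Nat.card {x : G // IsMaximalInvolution x} ≤ rainbowConnection (powerGraph G) := by
  classical
  have hne : {k : ℕ | ∃ ζ : Sym2 G → Fin k, IsRainbowColoring (powerGraph G) ζ}.Nonempty := by
    refine ⟨Fintype.card (Sym2 G), (Fintype.equivFin (Sym2 G)), fun u v => ?_⟩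
    by_cases huv : u = v
    · subst huv
      exact ⟨SimpleGraph.Walk.nil, SimpleGraph.Walk.IsPath.nil, by simp⟩
    · by_cases hadj : (powerGraph G).Adj u v
      · refine ⟨SimpleGraph.Walk.cons hadj SimpleGraph.Walk.nil, ?_, ?_⟩
        · simp [SimpleGraph.Walk.isPath_def, huv]
        · simp
      · have hu1 : u ≠ 1 := by
          rintro rfl
          exact hadj ⟨huv, Or.inl (one_mem _)⟩
        have hv1 : v ≠ 1 := by
          rintro rfl
          exact hadj ⟨huv, Or.inr (one_mem _)⟩
        have h1 : (powerGraph G).Adj u 1 := ⟨hu1, Or.inr (one_mem _)⟩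
        have h2 : (powerGraph G).Adj 1 v := ⟨Ne.symm hv1, Or.inl (one_mem _)⟩
        refine ⟨SimpleGraph.Walk.cons h1 (SimpleGraph.Walk.cons h2 SimpleGraph.Walk.nil), ?_, ?_⟩
        · simp [SimpleGraph.Walk.isPath_def, huv, hu1, hv1, Ne.symm hv1]
        · refine List.Nodup.map (Fintype.equivFin (Sym2 G)).injective ?_
          simp only [SimpleGraph.Walk.edges_cons, SimpleGraph.Walk.edges_nil]
          simp [Sym2.eq_iff, huv, hu1, hv1, Ne.symm hu1]
  have hmem := Nat.sInf_mem hne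
  obtain ⟨ζ, hζ⟩ := hmem
  unfold rainbowConnection
  have hf : Function.Injective (fun x : {x : G // IsMaximalInvolution x} => ζ s(x.1, 1)) := by
    rintro ⟨a, ha⟩ ⟨b, hb⟩ hfe
    simp only at hfe
    by_contra hab
    have hab' : a ≠ b := fun h => hab (Subtype.ext h)
    have ha1 : a ≠ 1 := by
      intro h; rw [h] at ha; simp [IsMaximalInvolution, orderOf_one] at ha
    obtain ⟨p, hp, hnodup⟩ := hζ a b
    have hma : s(a, 1) ∈ p.edges := edge_mem_of_walk ha hab' p
    have hmb : s(b, 1) ∈ p.edges := by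
      have := edge_mem_of_walk hb (Ne.symm hab') p.reverse
      rwa [SimpleGraph.Walk.edges_reverse, List.mem_reverse] at this
    have := List.inj_on_of_nodup_map hnodup hma hmb hfe
    rw [Sym2.eq_iff] at this
    rcases this with ⟨h1, _⟩ | ⟨h1, _⟩
    · exact hab' h1
    · exact ha1 h1
  calc Nat.card {x : G // IsMaximalInvolution x}
      ≤ Nat.card (Fin (sInf {k : ℕ | ∃ ζ : Sym2 G → Fin k, IsRainbowColoring (powerGraph G) ζ})) :=
        Nat.card_le_card_of_injective _ hf
    _ = _ := by simp
end

section
/- For every finite group G, the rainbow connection number of the power graph Γ_G is at most max{|M_G|, 3}, where |M_G| is the number of maximal involutions of G. -/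
section Aux

open Subgroup SimpleGraph

variable {G : Type*} [Group G] [Fintype G]

/-- Encoding of group elements into `ℕ`, used for tie-breaking. -/
noncomputable def encG (g : G) : ℕ := (Fintype.equivFin G g : ℕ)

lemma encG_injective : Function.Injective (encG (G := G)) := fun a b h =>
  (Fintype.equivFin G).injective (Fin.ext h)

/-- The tie-breaking set: elements of order at least 3 that are "smaller" than
their inverse. -/
noncomputable def inTG (v : G) : Prop := 3 ≤ orderOf v ∧ encG v < encG v⁻¹

lemma ne_inv_of_three_le_orderOf {v : G} (h : 3 ≤ orderOf v) : v ≠ v⁻¹ := by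
  intro hv
  have h2 : v ^ 2 = 1 := by
    rw [pow_two]; nth_rewrite 2 [hv]; exact mul_inv_cancel v
  have := orderOf_le_of_pow_eq_one (by norm_num) h2
  omega

lemma inTG_inv_of_not {v : G} (h3 : 3 ≤ orderOf v) (h : ¬ inTG v) : inTG v⁻¹ := by
  refine ⟨by rwa [orderOf_inv], ?_⟩
  rw [inv_inv]
  have hne : encG v⁻¹ ≠ encG v := fun he =>
    ne_inv_of_three_le_orderOf h3 (encG_injective he).symm
  have : ¬ encG v < encG v⁻¹ := fun hlt => h ⟨h3, hlt⟩
  omega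

lemma not_inTG_inv {v : G} (h : inTG v) : ¬ inTG v⁻¹ := by
  intro h'
  have := h.2
  have := h'.2
  rw [inv_inv] at this
  omega

lemma not_max_of_inTG {v : G} (h : inTG v) : ¬ IsMaximalInvolution v := by
  intro hm; have := h.1; rw [hm.1] at this; omega

lemma ne_one_of_inTG {v : G} (h : inTG v) : v ≠ 1 := by
  intro h1; have := h.1; rw [h1, orderOf_one] at this; omega

lemma mem_zpowers_inv (v : G) : v ∈ zpowers v⁻¹ := by
  rw [Subgroup.zpowers_inv]; exact Subgroup.mem_zpowers v

/-- Every non-identity non-maximal-involution element lies in the cyclic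
subgroup generated by some element of the tie-breaking set. -/
lemma exists_inTG_witness {v : G} (hv1 : v ≠ 1) (hvm : ¬ IsMaximalInvolution v)
    (hvT : ¬ inTG v) : ∃ w : G, inTG w ∧ v ∈ zpowers w := by
  by_cases h3 : 3 ≤ orderOf v
  · exact ⟨v⁻¹, inTG_inv_of_not h3 hvT, mem_zpowers_inv v⟩
  · -- v is an involution that is not maximal
    have hop : 0 < orderOf v := orderOf_pos v
    have ho1 : orderOf v ≠ 1 := fun h => hv1 (orderOf_eq_one_iff.mp h)
    have ho2 : orderOf v = 2 := by omega
    have : ¬ ∀ g : G, v ∈ zpowers g → zpowers g = zpowers v := fun h => hvm ⟨ho2, h⟩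
    push_neg at this
    obtain ⟨g, hvg, hgv⟩ := this
    have hg3 : 3 ≤ orderOf g := by
      by_contra hg3
      apply hgv
      refine (Subgroup.eq_of_le_of_card_ge (Subgroup.zpowers_le.mpr hvg) ?_).symm
      rw [Nat.card_zpowers, Nat.card_zpowers, ho2]
      omega
    by_cases hgT : inTG g
    · exact ⟨g, hgT, hvg⟩
    · refine ⟨g⁻¹, inTG_inv_of_not hg3 hgT, ?_⟩
      rwa [Subgroup.zpowers_inv]

lemma powerGraph_adj_one {x : G} (hx : x ≠ 1) : (powerGraph G).Adj 1 x :=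
  ⟨fun h => hx h.symm, Or.inl (Subgroup.one_mem _)⟩

lemma powerGraph_adj_of_mem {w v : G} (hne : w ≠ v) (h : v ∈ zpowers w) :
    (powerGraph G).Adj w v := ⟨hne, Or.inr h⟩

end Aux

open Subgroup SimpleGraph in
set_option maxHeartbeats 1000000 in
theorem rc_powerGraph_le_max_card_maximalInvolutions_three
    (G : Type*) [Group G] [Fintype G] :
    rainbowConnection (powerGraph G) ≤ max (Nat.card {x : G // IsMaximalInvolution x}) 3 := by
  classical
  set k := max (Nat.card {x : G // IsMaximalInvolution x}) 3 with hkdef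
  have hk3 : 3 ≤ k := le_max_right _ _
  have hkm : Fintype.card {x : G // IsMaximalInvolution x} ≤ k := by
    rw [← Nat.card_eq_fintype_card]; exact le_max_left _ _
  -- the three "generic" colors
  set c0 : Fin k := ⟨0, by omega⟩ with hc0
  set c1 : Fin k := ⟨1, by omega⟩ with hc1
  set c2 : Fin k := ⟨2, by omega⟩ with hc2
  have hc01 : c0 ≠ c1 := by simp [hc0, hc1, Fin.ext_iff]
  have hc02 : c0 ≠ c2 := by simp [hc0, hc2, Fin.ext_iff]
  have hc12 : c1 ≠ c2 := by simp [hc1, hc2, Fin.ext_iff]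
  -- pendant colors for maximal involutions
  set pend : {x : G // IsMaximalInvolution x} → Fin k :=
    fun y => Fin.castLE hkm (Fintype.equivFin _ y) with hpend
  have hpend_inj : Function.Injective pend := fun a b h => by
    apply (Fintype.equivFin _).injective
    exact Fin.castLE_injective hkm h
  -- vertex colors
  set vcol : G → Fin k := fun x =>
    if h : IsMaximalInvolution x then pend ⟨x, h⟩ else if inTG x then c2 else c1
    with hvcol
  have hvcol_max : ∀ x (h : IsMaximalInvolution x), vcol x = pend ⟨x, h⟩ := by
    intro x h; simp [hvcol, h]
  have hvcol_T : ∀ x, ¬ IsMaximalInvolution x → inTG x → vcol x = c2 := by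
    intro x h hT; simp [hvcol, h, hT]
  have hvcol_nT : ∀ x, ¬ IsMaximalInvolution x → ¬ inTG x → vcol x = c1 := by
    intro x h hT; simp [hvcol, h, hT]
  have hvcol_ne0 : ∀ x, ¬ IsMaximalInvolution x → vcol x ≠ c0 := by
    intro x h
    by_cases hT : inTG x
    · rw [hvcol_T x h hT]; exact hc02.symm
    · rw [hvcol_nT x h hT]; exact hc01.symm
  -- edge coloring
  set f : G → G → Fin k := fun a b =>
    if a = 1 then vcol b else if b = 1 then vcol a else c0 with hf
  have hfsymm : ∀ a b : G, f a b = f b a := by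
    intro a b
    simp only [hf]
    split_ifs with h1 h2 h2 <;> simp_all
  set ζ : Sym2 G → Fin k := Sym2.lift ⟨f, hfsymm⟩ with hζ
  have hζ1 : ∀ x : G, ζ s(1, x) = vcol x := by
    intro x; simp [hζ, hf]
  have hζ1' : ∀ x : G, ζ s(x, 1) = vcol x := by
    intro x
    simp only [hζ, Sym2.lift_mk, hf]
    split_ifs with h <;> simp [h]
  have hζ0 : ∀ a b : G, a ≠ 1 → b ≠ 1 → ζ s(a, b) = c0 := by
    intro a b ha hb; simp [hζ, hf, ha, hb]
  -- the key witness for alternative paths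
  have hwitness : ∀ v : G, v ≠ 1 → ¬ IsMaximalInvolution v →
      ∃ w : G, w ≠ 1 ∧ w ≠ v ∧ v ∈ Subgroup.zpowers w ∧
        vcol w ≠ vcol v ∧ vcol w ≠ c0 := by
    intro v hv1 hvm
    by_cases hT : inTG v
    · refine ⟨v⁻¹, ?_, ?_, mem_zpowers_inv v, ?_, ?_⟩
      · intro h; exact hv1 (by rwa [inv_eq_one] at h)
      · exact (ne_inv_of_three_le_orderOf hT.1).symm
      · have hmi : ¬ IsMaximalInvolution v⁻¹ := by
          intro hm
          have h3 := hT.1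
          have : orderOf v⁻¹ = 2 := hm.1
          rw [orderOf_inv] at this
          omega
        rw [hvcol_nT _ hmi (not_inTG_inv hT), hvcol_T _ hvm hT]
        exact hc12
      · have hmi : ¬ IsMaximalInvolution v⁻¹ := by
          intro hm
          have h3 := hT.1
          have : orderOf v⁻¹ = 2 := hm.1
          rw [orderOf_inv] at this
          omega
        rw [hvcol_nT _ hmi (not_inTG_inv hT)]
        exact hc01.symm
    · obtain ⟨w, hwT, hvw⟩ := exists_inTG_witness hv1 hvm hT
      have hwm := not_max_of_inTG hwT
      refine ⟨w, ne_one_of_inTG hwT, fun h => hT (h ▸ hwT), hvw, ?_, ?_⟩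
      · rw [hvcol_T _ hwm hwT, hvcol_nT _ hvm hT]
        exact hc12.symm
      · rw [hvcol_T _ hwm hwT]
        exact hc02.symm
  -- the coloring is rainbow
  have hrainbow : IsRainbowColoring (powerGraph G) ζ := by
    -- helper: the length-3 path in the equal-color case
    have key : ∀ a b : G, a ≠ 1 → b ≠ 1 → a ≠ b → vcol a = vcol b →
        ¬ IsMaximalInvolution b →
        ∃ p : (powerGraph G).Walk a b, p.IsPath ∧ (p.edges.map ζ).Nodup := by
      intro a b ha1 hb1 hab hcc hbm
      obtain ⟨w, hw1, hwb, hbw, hwc, hw0⟩ := hwitness b hb1 hbm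
      have haw : a ≠ w := by
        intro h; rw [← h] at hwc; exact hwc hcc
      refine ⟨Walk.cons ((powerGraph_adj_one ha1).symm)
        (Walk.cons (powerGraph_adj_one hw1)
          (Walk.cons (powerGraph_adj_of_mem hwb hbw) Walk.nil)), ?_, ?_⟩
      · rw [SimpleGraph.Walk.isPath_def]
        simp [ha1, haw, hab, (Ne.symm hw1), (Ne.symm hb1), hwb]
      · simp only [Walk.edges_cons, Walk.edges_nil, List.map_cons, List.map_nil]
        rw [hζ1' a, hζ1 w, hζ0 w b hw1 hb1]
        have ha0 : vcol a ≠ c0 := by rw [hcc]; exact hvcol_ne0 b hbm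
        have hawc : vcol a ≠ vcol w := by rw [hcc]; exact fun h => hwc h.symm
        simp [hawc, ha0, hw0]
    intro u v
    rcases eq_or_ne u v with rfl | huv
    · exact ⟨Walk.nil, Walk.IsPath.nil, by simp⟩
    by_cases hu1 : u = 1
    · subst hu1
      refine ⟨Walk.cons (powerGraph_adj_one (Ne.symm huv)) Walk.nil, ?_, by simp⟩
      rw [SimpleGraph.Walk.isPath_def]; simp [huv]
    by_cases hv1 : v = 1
    · subst hv1
      refine ⟨Walk.cons (powerGraph_adj_one hu1).symm Walk.nil, ?_, by simp⟩
      rw [SimpleGraph.Walk.isPath_def]; simp [hu1]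
    by_cases hcc : vcol u = vcol v
    · by_cases hvm : IsMaximalInvolution v
      · by_cases hum : IsMaximalInvolution u
        · exfalso
          rw [hvcol_max u hum, hvcol_max v hvm] at hcc
          have := hpend_inj hcc
          exact huv (congrArg Subtype.val this)
        · obtain ⟨p, hp, hn⟩ := key v u hv1 hu1 (Ne.symm huv) hcc.symm hum
          refine ⟨p.reverse, hp.reverse, ?_⟩
          rw [SimpleGraph.Walk.edges_reverse, List.map_reverse]
          exact List.nodup_reverse.mpr hn
      · exact key u v hu1 hv1 huv hcc hvm
    · refine ⟨Walk.cons (powerGraph_adj_one hu1).symm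
        (Walk.cons (powerGraph_adj_one hv1) Walk.nil), ?_, ?_⟩
      · rw [SimpleGraph.Walk.isPath_def]
        simp [hu1, huv, Ne.symm hv1]
      · simp only [Walk.edges_cons, Walk.edges_nil, List.map_cons, List.map_nil]
        rw [hζ1' u, hζ1 v]
        simp [hcc]
  exact Nat.sInf_le ⟨ζ, hrainbow⟩
end

section
/- If G is a finite group with at least 3 maximal involutions, then the rainbow connection number of the power graph Γ_G equals |M_G|. -/
namespace RCaux
attribute [local instance] Classical.propDecidable
variable {G : Type*} [Group G]

lemma mem_zpowers_two {x z : G} (hx : orderOf x = 2) (hz : z ∈ Subgroup.zpowers x) :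
    z = 1 ∨ z = x := by
  obtain ⟨k, rfl⟩ := hz
  show x ^ k = 1 ∨ x ^ k = x
  rw [← zpow_mod_orderOf, hx]
  have h0 : (0:ℤ) ≤ k % 2 := Int.emod_nonneg k (by norm_num)
  have h2 : k % 2 < 2 := Int.emod_lt_of_pos k (by norm_num)
  interval_cases h : (k % 2) <;> simp

lemma adj_one {x : G} (hx : x ≠ 1) : (powerGraph G).Adj 1 x :=
  ⟨fun h => hx h.symm, Or.inl (Subgroup.one_mem _)⟩

lemma maxinv_adj {x y : G} (hx : IsMaximalInvolution x) (h : (powerGraph G).Adj x y) :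
    y = 1 := by
  have hyx : y ∈ Subgroup.zpowers x := by
    rcases h.2 with h2 | h2
    · have := hx.2 y h2
      rw [← this]; exact Subgroup.mem_zpowers y
    · exact h2
  rcases mem_zpowers_two hx.1 hyx with h1 | h1
  · exact h1
  · exact absurd h1.symm h.1

lemma maxinv_ne_one {x : G} (hx : IsMaximalInvolution x) : x ≠ 1 := by
  intro h
  have := hx.1
  rw [h, orderOf_one] at this
  norm_num at this

lemma start_edge {x y : G} (hx : IsMaximalInvolution x) (p : (powerGraph G).Walk x y)
    (hxy : x ≠ y) : s(x, (1:G)) ∈ p.edges := by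
  cases p with
  | nil => exact absurd rfl hxy
  | cons h q =>
    rename_i b
    have hb : b = 1 := maxinv_adj hx h
    subst hb
    simp [SimpleGraph.Walk.edges_cons]

lemma end_edge {x y : G} (hy : IsMaximalInvolution y) (p : (powerGraph G).Walk x y)
    (hxy : x ≠ y) : s(y, (1:G)) ∈ p.edges := by
  have := start_edge hy p.reverse (Ne.symm hxy)
  rwa [SimpleGraph.Walk.edges_reverse, List.mem_reverse] at this

lemma lower [Fintype G] {k : ℕ} (ζ : Sym2 G → Fin k)
    (hζ : IsRainbowColoring (powerGraph G) ζ) :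
    Nat.card {x : G // IsMaximalInvolution x} ≤ k := by
  classical
  rw [Nat.card_eq_fintype_card]
  have : Function.Injective (fun x : {x : G // IsMaximalInvolution x} => ζ s(x.1, (1:G))) := by
    intro x y hxy
    by_contra hne
    have hne' : x.1 ≠ y.1 := fun h => hne (Subtype.ext h)
    obtain ⟨p, _, hnd⟩ := hζ x.1 y.1
    have h1 := start_edge x.2 p hne'
    have h2 := end_edge y.2 p hne'
    have := List.inj_on_of_nodup_map hnd h1 h2 hxy
    replace this := (Sym2.mk_eq_mk_iff (p := (x.1, (1:G))) (q := (y.1, (1:G)))).mp this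
    rcases this with h | h
    · exact hne' (by simpa using congrArg Prod.fst h)
    · exact maxinv_ne_one x.2 (by simpa using congrArg Prod.fst h)
  simpa using Fintype.card_le_of_injective _ this

noncomputable def sig {G : Type*} [Fintype G] : G ≃ Fin (Fintype.card G) :=
  letI := Classical.decEq G; Fintype.equivFin G

noncomputable def c3 [Fintype G] (u : G) : ℕ :=
  if (sig u : ℕ) < (sig u⁻¹ : ℕ) then 0 else 1

noncomputable def g0 (u : G) : G :=
  if h : ∃ g : G, u ∈ Subgroup.zpowers g ∧ Subgroup.zpowers g ≠ Subgroup.zpowers u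
  then h.choose else 1

def flipn (n : ℕ) : ℕ := if n = 0 then 1 else 0

lemma flipn_ne (n : ℕ) : flipn n ≠ n := by unfold flipn; split_ifs with h <;> omega

lemma flipn_le_one (n : ℕ) : flipn n ≤ 1 := by unfold flipn; split_ifs <;> omega

noncomputable def cfun [Fintype G] (u : G) : ℕ :=
  if 3 ≤ orderOf u then c3 u
  else if orderOf u = 2 ∧ ¬ IsMaximalInvolution u then flipn (c3 (g0 u))
  else 0

lemma c3_le_one [Fintype G] (u : G) : c3 u ≤ 1 := by unfold c3; split_ifs <;> omega

lemma cfun_le_one [Fintype G] (u : G) : cfun u ≤ 1 := by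
  unfold cfun; split_ifs <;> first | exact c3_le_one _ | exact flipn_le_one _ | omega

noncomputable def wfun (u : G) : G := if 3 ≤ orderOf u then u⁻¹ else g0 u

lemma c3_inv_ne [Fintype G] {u : G} (hne : u ≠ u⁻¹) : c3 u⁻¹ ≠ c3 u := by
  have hσ : (sig u : ℕ) ≠ (sig u⁻¹ : ℕ) := by
    intro h
    exact hne (sig.injective (Fin.val_injective h))
  unfold c3
  rw [inv_inv]
  split_ifs with ha hb hb <;> omega

lemma wfun_spec [Fintype G] {u : G} (hu1 : u ≠ 1) (hu : ¬ IsMaximalInvolution u) :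
    (powerGraph G).Adj u (wfun u) ∧ wfun u ≠ 1 ∧ ¬ IsMaximalInvolution (wfun u) ∧
      cfun (wfun u) ≠ cfun u := by
  by_cases h3 : 3 ≤ orderOf u
  · have hw : wfun u = u⁻¹ := if_pos h3
    have hne : u ≠ u⁻¹ := by
      intro h
      have : u ^ 2 = 1 := by rw [pow_two]; rw [eq_inv_iff_mul_eq_one] at h; exact h
      have := Nat.le_of_dvd (by norm_num) (orderOf_dvd_of_pow_eq_one this)
      omega
    have hadj : (powerGraph G).Adj u (wfun u) := by
      rw [hw]
      exact ⟨hne, Or.inr (Subgroup.inv_mem _ (Subgroup.mem_zpowers u))⟩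
    have hinvord : orderOf (u⁻¹ : G) = orderOf u := orderOf_inv u
    refine ⟨hadj, ?_, ?_, ?_⟩
    · rw [hw]; simpa using hu1
    · rw [hw]; intro hmax; rw [hmax.1] at hinvord; omega
    · rw [hw]
      rw [show cfun u⁻¹ = c3 u⁻¹ from if_pos (by omega),
          show cfun u = c3 u from if_pos h3]
      exact c3_inv_ne hne
  · have ho2 : orderOf u = 2 := by
      have hpos : 0 < orderOf u := orderOf_pos u
      have hne1 : orderOf u ≠ 1 := by
        intro h; exact hu1 (orderOf_eq_one_iff.mp h)
      omega
    have hex : ∃ g : G, u ∈ Subgroup.zpowers g ∧ Subgroup.zpowers g ≠ Subgroup.zpowers u := by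
      by_contra hc
      push_neg at hc
      exact hu ⟨ho2, fun g hg => hc g hg⟩
    have hg : u ∈ Subgroup.zpowers (g0 u) ∧
        Subgroup.zpowers (g0 u) ≠ Subgroup.zpowers u := by
      rw [show g0 u = hex.choose from dif_pos hex]
      exact hex.choose_spec
    have hgne1 : g0 u ≠ 1 := by
      intro h
      rw [h, Subgroup.zpowers_one_eq_bot, Subgroup.mem_bot] at hg
      exact hu1 hg.1
    have hune : u ≠ g0 u := by
      intro h; exact hg.2 (by rw [← h])
    have hord3 : 3 ≤ orderOf (g0 u) := by
      have hpos : 0 < orderOf (g0 u) := orderOf_pos _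
      have h1 : orderOf (g0 u) ≠ 1 := fun h => hgne1 (orderOf_eq_one_iff.mp h)
      have h2 : orderOf (g0 u) ≠ 2 := by
        intro h
        rcases mem_zpowers_two h hg.1 with hh | hh
        · exact hu1 hh
        · exact hune hh
      omega
    have hw : wfun u = g0 u := if_neg h3
    refine ⟨?_, ?_, ?_, ?_⟩
    · rw [hw]; exact ⟨hune, Or.inl hg.1⟩
    · rw [hw]; exact hgne1
    · rw [hw]; intro hmax; rw [hmax.1] at hord3; omega
    · rw [hw, show cfun (g0 u) = c3 (g0 u) from if_pos hord3,
          show cfun u = flipn (c3 (g0 u)) from by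
            rw [cfun, if_neg h3, if_pos ⟨ho2, hu⟩]]
      exact (flipn_ne _).symm

noncomputable def fcol (ι : G → ℕ) [Fintype G] (u v : G) : ℕ :=
  if IsMaximalInvolution u ∧ v = 1 then ι u
  else if IsMaximalInvolution v ∧ u = 1 then ι v
  else if u = 1 then cfun v
  else if v = 1 then cfun u
  else 2

lemma fcol_symm (ι : G → ℕ) [Fintype G] (u v : G) : fcol ι u v = fcol ι v u := by
  have h1 : ¬(IsMaximalInvolution (1:G)) := fun h => maxinv_ne_one h rfl
  unfold fcol
  split_ifs <;> first | rfl | simp_all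

open SimpleGraph in
lemma upper [Fintype G] (h3 : 3 ≤ Nat.card {x : G // IsMaximalInvolution x}) :
    ∃ ζ : Sym2 G → Fin (Nat.card {x : G // IsMaximalInvolution x}),
      IsRainbowColoring (powerGraph G) ζ := by
  set m := Nat.card {x : G // IsMaximalInvolution x} with hmdef
  have hMI1 : ¬ IsMaximalInvolution (1:G) := fun h => maxinv_ne_one h rfl
  let eqv : {x : G // IsMaximalInvolution x} ≃ Fin m :=
    Fintype.equivFinOfCardEq Nat.card_eq_fintype_card.symm
  let ι : G → ℕ := fun u => if h : IsMaximalInvolution u then (eqv ⟨u, h⟩ : Fin m).val else 0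
  have hι_lt : ∀ u, IsMaximalInvolution u → ι u < m := by
    intro u hu
    simp only [ι, dif_pos hu]
    exact (eqv ⟨u, hu⟩).isLt
  have hι_inj : ∀ u v, IsMaximalInvolution u → IsMaximalInvolution v → ι u = ι v → u = v := by
    intro u v hu hv h
    simp only [ι, dif_pos hu, dif_pos hv] at h
    have := eqv.injective (Fin.val_injective h)
    exact congrArg Subtype.val this
  have flt : ∀ u v : G, fcol ι u v < m := by
    intro u v
    unfold fcol
    split_ifs with h1 h2 h3' h4
    · exact hι_lt u h1.1
    · exact hι_lt v h2.1
    · exact lt_of_le_of_lt (cfun_le_one v) (by omega)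
    · exact lt_of_le_of_lt (cfun_le_one u) (by omega)
    · omega
  let F : Sym2 G → ℕ := Sym2.lift ⟨fcol ι, fcol_symm ι⟩
  have hF : ∀ u v : G, F s(u,v) = fcol ι u v := fun u v => Sym2.lift_mk _ u v
  have hFlt : ∀ s : Sym2 G, F s < m := by
    intro s
    induction s using Sym2.ind with
    | _ u v => rw [hF]; exact flt u v
  refine ⟨fun s => ⟨F s, hFlt s⟩, ?_⟩
  set ζ : Sym2 G → Fin m := fun s => ⟨F s, hFlt s⟩ with hζdef
  have hζval : ∀ u v : G, (ζ s(u,v) : ℕ) = fcol ι u v := fun u v => hF u v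
  have hζne : ∀ a b c d : G, fcol ι a b ≠ fcol ι c d → ζ s(a,b) ≠ ζ s(c,d) := by
    intro a b c d h hq
    apply h
    have := congrArg Fin.val hq
    rwa [hζval, hζval] at this
  have hfM1 : ∀ u : G, IsMaximalInvolution u → fcol ι u 1 = ι u := by
    intro u hu; unfold fcol; rw [if_pos ⟨hu, rfl⟩]
  have hf1M : ∀ v : G, IsMaximalInvolution v → fcol ι 1 v = ι v := by
    intro v hv
    unfold fcol
    rw [if_neg (fun h => hMI1 h.1), if_pos ⟨hv, rfl⟩]
  have hf1c : ∀ v : G, ¬ IsMaximalInvolution v → fcol ι 1 v = cfun v := by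
    intro v hv
    unfold fcol
    rw [if_neg (fun h => hMI1 h.1), if_neg (fun h => hv h.1), if_pos rfl]
  have hfc1 : ∀ u : G, ¬ IsMaximalInvolution u → u ≠ 1 → fcol ι u 1 = cfun u := by
    intro u hu hu1
    unfold fcol
    rw [if_neg (fun h => hu h.1), if_neg (fun h => hMI1 h.1), if_neg hu1, if_pos rfl]
  have hf2 : ∀ u v : G, ¬ IsMaximalInvolution u → ¬ IsMaximalInvolution v →
      u ≠ 1 → v ≠ 1 → fcol ι u v = 2 := by
    intro u v hu hv hu1 hv1
    unfold fcol
    rw [if_neg (fun h => hu h.1), if_neg (fun h => hv h.1), if_neg hu1, if_neg hv1]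
  have path1 : ∀ a b : G, (powerGraph G).Adj a b →
      ∃ p : (powerGraph G).Walk a b, p.IsPath ∧ (p.edges.map ζ).Nodup := by
    intro a b h
    exact ⟨Walk.cons h Walk.nil, by simp [h.ne], by simp⟩
  have path2 : ∀ a b c : G, (powerGraph G).Adj a b → (powerGraph G).Adj b c → a ≠ c →
      ζ s(a,b) ≠ ζ s(b,c) →
      ∃ p : (powerGraph G).Walk a c, p.IsPath ∧ (p.edges.map ζ).Nodup := by
    intro a b c h1 h2 hac hcol
    refine ⟨Walk.cons h1 (Walk.cons h2 Walk.nil), ?_, ?_⟩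
    · rw [Walk.cons_isPath_iff, Walk.cons_isPath_iff]
      refine ⟨⟨by simp, by simp [h2.ne]⟩, by simp [h1.ne, hac]⟩
    · simp [hcol]
  have path3 : ∀ a b c d : G, (powerGraph G).Adj a b → (powerGraph G).Adj b c →
      (powerGraph G).Adj c d → a ≠ c → a ≠ d → b ≠ d →
      ζ s(a,b) ≠ ζ s(b,c) → ζ s(a,b) ≠ ζ s(c,d) → ζ s(b,c) ≠ ζ s(c,d) →
      ∃ p : (powerGraph G).Walk a d, p.IsPath ∧ (p.edges.map ζ).Nodup := by
    intro a b c d h1 h2 h3 hac had hbd hc1 hc2 hc3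
    refine ⟨Walk.cons h1 (Walk.cons h2 (Walk.cons h3 Walk.nil)), ?_, ?_⟩
    · rw [Walk.cons_isPath_iff, Walk.cons_isPath_iff, Walk.cons_isPath_iff]
      refine ⟨⟨⟨by simp, by simp [h3.ne]⟩, by simp [h2.ne, hbd]⟩, by simp [h1.ne, hac, had]⟩
    · simp [hc1, hc2, hc3]
  have rev : ∀ a b : G, (∃ p : (powerGraph G).Walk a b, p.IsPath ∧ (p.edges.map ζ).Nodup) →
      ∃ p : (powerGraph G).Walk b a, p.IsPath ∧ (p.edges.map ζ).Nodup := by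
    rintro a b ⟨p, hp, hnd⟩
    exact ⟨p.reverse, hp.reverse, by rwa [Walk.edges_reverse, List.map_reverse, List.nodup_reverse]⟩
  have core : ∀ a b : G, a ≠ 1 → b ≠ 1 → a ≠ b →
      (IsMaximalInvolution a ∨ ¬ IsMaximalInvolution b) →
      ∃ p : (powerGraph G).Walk a b, p.IsPath ∧ (p.edges.map ζ).Nodup := by
    intro a b ha1 hb1 hab hcase
    have hA1 : (powerGraph G).Adj a 1 := (adj_one ha1).symm
    have h1B : (powerGraph G).Adj 1 b := adj_one hb1
    by_cases hMb : IsMaximalInvolution b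
    · have hMa : IsMaximalInvolution a := by tauto
      refine path2 a 1 b hA1 h1B hab ?_
      apply hζne
      rw [hfM1 a hMa, hf1M b hMb]
      intro h
      exact hab (hι_inj a b hMa hMb h)
    · obtain ⟨hadj, hw1, hwM, hwc⟩ := wfun_spec hb1 hMb
      by_cases hMa : IsMaximalInvolution a
      · by_cases hcc : ι a = cfun b
        · have hwa : a ≠ wfun b := fun h => hwM (h ▸ hMa)
          refine path3 a 1 (wfun b) b hA1 (adj_one hw1) hadj.symm
            hwa hab (fun h => hb1 h.symm) ?_ ?_ ?_
          · apply hζne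
            rw [hfM1 a hMa, hf1c _ hwM]
            rw [hcc]
            exact fun h => hwc (h.symm)
          · apply hζne
            rw [hfM1 a hMa, hf2 _ _ hwM hMb hw1 hb1, hcc]
            have := cfun_le_one b
            omega
          · apply hζne
            rw [hf1c _ hwM, hf2 _ _ hwM hMb hw1 hb1]
            have := cfun_le_one (wfun b)
            omega
        · refine path2 a 1 b hA1 h1B hab ?_
          apply hζne
          rw [hfM1 a hMa, hf1c _ hMb]
          exact hcc
      · by_cases hcc : cfun a = cfun b
        · by_cases hadj' : (powerGraph G).Adj a b
          · exact path1 a b hadj'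
          · have hwa : wfun b ≠ a := by
              intro h
              exact hadj' (h ▸ hadj.symm : (powerGraph G).Adj a b)
            refine path3 a 1 (wfun b) b hA1 (adj_one hw1) hadj.symm
              (Ne.symm hwa) hab (fun h => hb1 h.symm) ?_ ?_ ?_
            · apply hζne
              rw [hfc1 a hMa ha1, hf1c _ hwM, hcc]
              exact fun h => hwc h.symm
            · apply hζne
              rw [hfc1 a hMa ha1, hf2 _ _ hwM hMb hw1 hb1]
              have := cfun_le_one a
              omega
            · apply hζne
              rw [hf1c _ hwM, hf2 _ _ hwM hMb hw1 hb1]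
              have := cfun_le_one (wfun b)
              omega
        · refine path2 a 1 b hA1 h1B hab ?_
          apply hζne
          rw [hfc1 a hMa ha1, hf1c _ hMb]
          exact hcc
  intro u v
  rcases eq_or_ne u v with rfl | huv
  · exact ⟨Walk.nil, Walk.IsPath.nil, by simp⟩
  rcases eq_or_ne u 1 with rfl | hu1
  · exact path1 1 v (adj_one huv.symm)
  rcases eq_or_ne v 1 with rfl | hv1
  · exact path1 u 1 (adj_one hu1).symm
  by_cases hc : ¬ IsMaximalInvolution u ∧ IsMaximalInvolution v
  · exact rev v u (core v u hv1 hu1 huv.symm (Or.inl hc.2))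
  · apply core u v hu1 hv1 huv
    tauto

end RCaux

theorem rc_powerGraph_eq_card_maximalInvolutions
    (G : Type*) [Group G] [Fintype G]
    (h : 3 ≤ Nat.card {x : G // IsMaximalInvolution x}) :
    rainbowConnection (powerGraph G) = Nat.card {x : G // IsMaximalInvolution x} := by
  obtain ⟨ζ, hζ⟩ := RCaux.upper h
  have hmem : Nat.card {x : G // IsMaximalInvolution x} ∈
      {k : ℕ | ∃ ζ : Sym2 G → Fin k, IsRainbowColoring (powerGraph G) ζ} := ⟨ζ, hζ⟩
  refine le_antisymm (Nat.sInf_le hmem) (le_csInf ⟨_, hmem⟩ ?_)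
  rintro k ⟨ζ', hζ'⟩
  exact RCaux.lower ζ' hζ'
end

section
/- Let G be a finite group and let p be a prime dividing |G|. If the rainbow connection number of the power graph Γ_G equals 2, then G has exactly one subgroup of order p. -/
section AuxLemmas

open Subgroup

variable {G : Type*} [Group G] [Finite G]

private lemma aux_eq_of_le_of_card_le {H K : Subgroup G} (h : H ≤ K)
    (hc : Nat.card K ≤ Nat.card H) : H = K := by
  apply SetLike.ext'
  apply Set.eq_of_subset_of_ncard_le h ?_ (Set.toFinite _)
  rw [← Nat.card_coe_set_eq, ← Nat.card_coe_set_eq]; exact hc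

private lemma aux_gen {p : ℕ} (hp : p.Prime) {H : Subgroup G} (hH : Nat.card H = p)
    {x : G} (hx : x ∈ H) (hx1 : x ≠ 1) : zpowers x = H ∧ orderOf x = p := by
  have hdvd : orderOf x ∣ p := hH ▸ Subgroup.orderOf_dvd_natCard H hx
  have hord : orderOf x = p := by
    rcases (Nat.Prime.eq_one_or_self_of_dvd hp _ hdvd) with h | h
    · exact absurd (orderOf_eq_one_iff.mp h) hx1
    · exact h
  refine ⟨aux_eq_of_le_of_card_le (zpowers_le.mpr hx) ?_, hord⟩
  rw [Nat.card_zpowers, hord, hH]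

private lemma aux_inf_bot {p : ℕ} (hp : p.Prime) {H K : Subgroup G}
    (hH : Nat.card H = p) (hK : Nat.card K = p) (hne : H ≠ K) : H ⊓ K = ⊥ := by
  have hdvd : Nat.card (H ⊓ K : Subgroup G) ∣ p := hH ▸ Subgroup.card_dvd_of_le inf_le_left
  rcases (Nat.Prime.eq_one_or_self_of_dvd hp _ hdvd) with h | h
  · exact Subgroup.card_eq_one.mp h
  · exfalso
    have h1 : H ⊓ K = H := aux_eq_of_le_of_card_le inf_le_left (by rw [h, hH])
    have h2 : H ≤ K := h1 ▸ inf_le_right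
    exact hne (aux_eq_of_le_of_card_le h2 (by rw [hH, hK]))

/-- In the cyclic group generated by `z`, elements of order `p` generate the same
subgroup. -/
private lemma aux_cyclic_unique {p : ℕ} (hp : p.Prime) {z x y : G}
    (hx : x ∈ zpowers z) (hy : y ∈ zpowers z)
    (hox : orderOf x = p) (hoy : orderOf y = p) : zpowers x = zpowers y := by
  have key : ∀ w : G, w ∈ zpowers z → orderOf w = p →
      zpowers w = zpowers (z ^ (orderOf z / p)) := by
    intro w hw how
    have hm0 : orderOf z ≠ 0 := (orderOf_pos z).ne'
    have hpm : p ∣ orderOf z := how ▸ orderOf_dvd_of_mem_zpowers hw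
    obtain ⟨n, hn⟩ := (Submonoid.mem_powers_iff _ _).mp (mem_powers_iff_mem_zpowers.mpr hw)
    have h1 : orderOf z / Nat.gcd (orderOf z) n = p := by
      rw [← orderOf_pow, hn, how]
    have hgd : Nat.gcd (orderOf z) n = orderOf z / p := by
      rw [← h1, Nat.div_div_self (Nat.gcd_dvd_left _ _) hm0]
    have hdn : orderOf z / p ∣ n := hgd ▸ Nat.gcd_dvd_right _ _
    obtain ⟨t, ht⟩ := hdn
    have hwmem : w ∈ zpowers (z ^ (orderOf z / p)) := by
      rw [← hn, ht, pow_mul]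
      exact npow_mem_zpowers _ t
    have hcard : orderOf (z ^ (orderOf z / p)) = p := by
      rw [orderOf_pow, Nat.gcd_eq_right (Nat.div_dvd_of_dvd hpm),
        Nat.div_div_self hpm hm0]
    refine aux_eq_of_le_of_card_le (zpowers_le.mpr hwmem) ?_
    rw [Nat.card_zpowers, Nat.card_zpowers, hcard, how]
  rw [key x hx hox, key y hy hoy]

/-- Conjugation map on subgroups. -/
private abbrev cmap (g : G) (J : Subgroup G) : Subgroup G :=
  J.map (MulAut.conj g).toMonoidHom

private lemma cmap_card (g : G) (J : Subgroup G) : Nat.card (cmap g J) = Nat.card J :=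
  (Nat.card_congr (J.equivMapOfInjective _ (MulAut.conj g).injective).toEquiv).symm

private lemma cmap_self {g : G} {J : Subgroup G} (hg : g ∈ J) : cmap g J = J := by
  apply aux_eq_of_le_of_card_le
  · rintro x hx
    obtain ⟨h, hh, rfl⟩ := Subgroup.mem_map.mp hx
    simpa using J.mul_mem (J.mul_mem hg hh) (J.inv_mem hg)
  · rw [cmap_card]

private lemma cmap_cmap (g : G) (J : Subgroup G) : cmap g⁻¹ (cmap g J) = J := by
  show (J.map _).map _ = J
  rw [Subgroup.map_map]
  have : (MulAut.conj g⁻¹).toMonoidHom.comp (MulAut.conj g).toMonoidHom = MonoidHom.id G := by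
    ext x; simp [mul_assoc]
  rw [this, Subgroup.map_id]

/-- If a finite group has two distinct subgroups of prime order `p`, it has a third one. -/
private lemma exists_third {p : ℕ} (hp : p.Prime) {H K : Subgroup G}
    (hH : Nat.card H = p) (hK : Nat.card K = p) (hne : H ≠ K) :
    ∃ L : Subgroup G, Nat.card L = p ∧ L ≠ H ∧ L ≠ K := by
  have hinf := aux_inf_bot hp hH hK hne
  by_cases h1 : ∃ k ∈ K, cmap k H ≠ H
  · obtain ⟨k, hk, hkH⟩ := h1
    refine ⟨cmap k H, by rw [cmap_card, hH], hkH, ?_⟩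
    intro hEq
    apply hne
    have := cmap_cmap k H
    rw [hEq, cmap_self (K.inv_mem hk)] at this
    exact this.symm
  by_cases h2 : ∃ h ∈ H, cmap h K ≠ K
  · obtain ⟨h, hh, hhK⟩ := h2
    refine ⟨cmap h K, by rw [cmap_card, hK], ?_, hhK⟩
    intro hEq
    apply hne
    have := cmap_cmap h K
    rw [hEq, cmap_self (H.inv_mem hh)] at this
    exact this
  -- no escape: K normalizes H and H normalizes K
  push_neg at h1 h2
  have hKH : ∀ k ∈ K, ∀ h ∈ H, k * h * k⁻¹ ∈ H := by
    intro k hk h hh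
    have := h1 k hk
    rw [← this]
    exact Subgroup.mem_map.mpr ⟨h, hh, by simp⟩
  have hHK : ∀ h ∈ H, ∀ k ∈ K, h * k * h⁻¹ ∈ K := by
    intro h hh k hk
    have := h2 h hh
    rw [← this]
    exact Subgroup.mem_map.mpr ⟨k, hk, by simp⟩
  -- pick nontrivial elements
  have hHp : H ≠ ⊥ :=
    fun hb => absurd (by rw [hb, Subgroup.card_bot] at hH; exact hH) hp.one_lt.ne
  have hKp : K ≠ ⊥ :=
    fun hb => absurd (by rw [hb, Subgroup.card_bot] at hK; exact hK) hp.one_lt.ne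
  obtain ⟨h, hh, hh1⟩ := H.bot_or_exists_ne_one.resolve_left hHp
  obtain ⟨k, hk, hk1⟩ := K.bot_or_exists_ne_one.resolve_left hKp
  have hmem_bot : ∀ x : G, x ∈ H → x ∈ K → x = 1 := by
    intro x hxH hxK
    have : x ∈ H ⊓ K := ⟨hxH, hxK⟩
    rwa [hinf, Subgroup.mem_bot] at this
  have hcomm : Commute h k := by
    have c1 : h * k * h⁻¹ * k⁻¹ ∈ H := by
      have : k * h⁻¹ * k⁻¹ ∈ H := hKH k hk h⁻¹ (H.inv_mem hh)
      have := H.mul_mem hh this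
      convert this using 1
      group
    have c2 : h * k * h⁻¹ * k⁻¹ ∈ K := K.mul_mem (hHK h hh k hk) (K.inv_mem hk)
    have e : h * k * h⁻¹ * k⁻¹ = 1 := hmem_bot _ c1 c2
    have : h * k = k * h := by
      calc h * k = (h * k * h⁻¹ * k⁻¹) * (k * h) := by group
        _ = k * h := by rw [e, one_mul]
    exact this
  have hk1' : h * k ≠ 1 := by
    intro e
    apply hk1
    have hh' : h = k⁻¹ := eq_inv_of_mul_eq_one_left e
    have hkinv : k = h⁻¹ := by rw [hh', inv_inv]
    exact hmem_bot k (hkinv ▸ H.inv_mem hh) hk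
  -- h and k have order p
  obtain ⟨-, hoh⟩ := aux_gen hp hH hh hh1
  obtain ⟨-, hok⟩ := aux_gen hp hK hk hk1
  have hpow : (h * k) ^ p = 1 := by
    have e1 : h ^ p = 1 := hoh ▸ pow_orderOf_eq_one h
    have e2 : k ^ p = 1 := hok ▸ pow_orderOf_eq_one k
    rw [hcomm.mul_pow, e1, e2, one_mul]
  have hohk : orderOf (h * k) = p := by
    rcases hp.eq_one_or_self_of_dvd _ (orderOf_dvd_of_pow_eq_one hpow) with h' | h'
    · exact absurd (orderOf_eq_one_iff.mp h') hk1'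
    · exact h'
  refine ⟨zpowers (h * k), by rw [Nat.card_zpowers, hohk], ?_, ?_⟩
  · intro hEq
    have hmemH : h * k ∈ H := hEq ▸ mem_zpowers (h * k)
    have hkH' : k ∈ H := by
      have := H.mul_mem (H.inv_mem hh) hmemH
      simpa [mul_assoc] using this
    exact hk1 (hmem_bot k hkH' hk)
  · intro hEq
    have hmemK : h * k ∈ K := hEq ▸ mem_zpowers (h * k)
    have hhK' : h ∈ K := by
      have := K.mul_mem hmemK (K.inv_mem hk)
      simpa [mul_assoc] using this
    exact hh1 (hmem_bot h hh hhK')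

end AuxLemmas

section ColorLemma

open Subgroup

variable {G : Type*} [Group G] [Fintype G]

/-- Key lemma: if `x`, `y` are nontrivial elements of distinct subgroups of prime order
`p`, then a rainbow 2-coloring must give distinct colors to the edges `{x, 1}` and
`{y, 1}`, since the only rainbow path between `x` and `y` goes through `1`. -/
private lemma aux_color {p : ℕ} (hp : p.Prime) {ζ : Sym2 G → Fin 2}
    (hζ : IsRainbowColoring (powerGraph G) ζ) {H K : Subgroup G}
    (hH : Nat.card H = p) (hK : Nat.card K = p) (hne : H ≠ K)
    {x y : G} (hx : x ∈ H) (hx1 : x ≠ 1) (hy : y ∈ K) (hy1 : y ≠ 1) :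
    ζ s(x, (1 : G)) ≠ ζ s(y, (1 : G)) := by
  obtain ⟨hzx, hox⟩ := aux_gen hp hH hx hx1
  obtain ⟨hzy, hoy⟩ := aux_gen hp hK hy hy1
  have hxy : x ≠ y := fun e => hne (by rw [← hzx, e, hzy])
  have hHK_le : ¬ x ∈ zpowers y := by
    intro hmem
    exact hne (aux_eq_of_le_of_card_le (hzx ▸ hzy ▸ zpowers_le.mpr hmem) (by rw [hH, hK]))
  have hKH_le : ¬ y ∈ zpowers x := by
    intro hmem
    exact hne ((aux_eq_of_le_of_card_le (hzy ▸ hzx ▸ zpowers_le.mpr hmem)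
      (by rw [hH, hK])).symm)
  have hnadj : ¬ (powerGraph G).Adj x y := by
    rintro ⟨-, hc | hc⟩
    · exact hHK_le hc
    · exact hKH_le hc
  have hinf := aux_inf_bot hp hH hK hne
  have hmem_bot : ∀ w : G, w ∈ H → w ∈ K → w = 1 := by
    intro w hwH hwK
    have : w ∈ H ⊓ K := ⟨hwH, hwK⟩
    rwa [hinf, Subgroup.mem_bot] at this
  -- the only common neighbor of x and y is 1
  have hcn : ∀ z : G, (powerGraph G).Adj x z → (powerGraph G).Adj z y → z = 1 := by
    rintro z ⟨-, hc1⟩ ⟨-, hc2⟩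
    rcases hc1 with hc1 | hc1
    · rcases hc2 with hc2 | hc2
      · -- x ∈ ⟨z⟩, z ∈ ⟨y⟩
        exact absurd (zpowers_le.mp (le_trans (zpowers_le.mpr hc1) (zpowers_le.mpr hc2)))
          hHK_le
      · -- x ∈ ⟨z⟩, y ∈ ⟨z⟩
        exact absurd (aux_cyclic_unique hp hc1 hc2 hox hoy)
          (fun e => hne (by rw [← hzx, e, hzy]))
    · rcases hc2 with hc2 | hc2
      · -- z ∈ ⟨x⟩, z ∈ ⟨y⟩
        exact hmem_bot z (hzx ▸ hc1) (hzy ▸ hc2)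
      · -- z ∈ ⟨x⟩, y ∈ ⟨z⟩
        have : y ∈ H := hzx ▸ zpowers_le.mpr hc1 (by exact hc2)
        exact absurd (hmem_bot y this hy) hy1
  obtain ⟨w, -, hwn⟩ := hζ x y
  have hlen : w.edges.length ≤ 2 := by
    have h1 : (w.edges.map ζ).length ≤ Fintype.card (Fin 2) := hwn.length_le_card
    simpa using h1
  cases w with
  | nil => exact absurd rfl hxy
  | cons ha wt =>
    cases wt with
    | nil => exact absurd ha hnadj
    | cons hb wt2 =>
      cases wt2 with
      | cons hc wt3 => simp [SimpleGraph.Walk.edges_cons] at hlen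
      | nil =>
        have hz1 := hcn _ ha hb
        subst hz1
        simp only [SimpleGraph.Walk.edges_cons, SimpleGraph.Walk.edges_nil,
          List.map_cons, List.map_nil, List.nodup_cons, List.mem_singleton,
          List.nodup_nil, and_true, List.not_mem_nil, not_false_iff] at hwn
        intro hEq
        exact hwn (hEq.trans (congrArg ζ Sym2.eq_swap))

end ColorLemma

theorem unique_subgroup_of_prime_order_of_rc_eq_two
    (G : Type*) [Group G] [Fintype G] (p : ℕ) (hp : p.Prime)
    (hdvd : p ∣ Fintype.card G)
    (hrc : rainbowConnection (powerGraph G) = 2) :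
    ∃! H : Subgroup G, Nat.card H = p := by
  classical
  haveI : Fact p.Prime := ⟨hp⟩
  -- extract a rainbow 2-coloring
  have hS : {k : ℕ | ∃ ζ : Sym2 G → Fin k, IsRainbowColoring (powerGraph G) ζ}.Nonempty := by
    by_contra h
    rw [Set.not_nonempty_iff_eq_empty] at h
    have : rainbowConnection (powerGraph G) = 0 := by
      rw [rainbowConnection, h, Nat.sInf_empty]
    omega
  have h2 : (2 : ℕ) ∈ {k : ℕ | ∃ ζ : Sym2 G → Fin k, IsRainbowColoring (powerGraph G) ζ} := by
    have hmem := Nat.sInf_mem hS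
    rwa [← rainbowConnection, hrc] at hmem
  obtain ⟨ζ, hζ⟩ := h2
  -- Cauchy's theorem gives one subgroup of order p
  obtain ⟨g, hg⟩ := exists_prime_orderOf_dvd_card p hdvd
  have hgcard : Nat.card (Subgroup.zpowers g) = p := by rw [Nat.card_zpowers, hg]
  refine ⟨Subgroup.zpowers g, hgcard, ?_⟩
  intro K hK
  by_contra hne
  obtain ⟨L, hL, hLK, hLg⟩ := exists_third hp hK hgcard hne
  -- nontrivial elements of the three subgroups
  have hg1 : g ≠ 1 := fun e => hp.one_lt.ne (by rw [← hg, e, orderOf_one])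
  have hKb : K ≠ ⊥ :=
    fun hb => absurd (by rw [hb, Subgroup.card_bot] at hK; exact hK) hp.one_lt.ne
  have hLb : L ≠ ⊥ :=
    fun hb => absurd (by rw [hb, Subgroup.card_bot] at hL; exact hL) hp.one_lt.ne
  obtain ⟨xk, hxk, hxk1⟩ := K.bot_or_exists_ne_one.resolve_left hKb
  obtain ⟨xl, hxl, hxl1⟩ := L.bot_or_exists_ne_one.resolve_left hLb
  -- the three edge colors at 1 must be pairwise distinct: impossible in Fin 2
  have d1 : ζ s(xk, (1 : G)) ≠ ζ s(g, (1 : G)) :=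
    aux_color hp hζ hK hgcard hne hxk hxk1 (Subgroup.mem_zpowers g) hg1
  have d2 : ζ s(xk, (1 : G)) ≠ ζ s(xl, (1 : G)) :=
    aux_color hp hζ hK hL (fun e => hLK e.symm) hxk hxk1 hxl hxl1
  have d3 : ζ s(g, (1 : G)) ≠ ζ s(xl, (1 : G)) :=
    aux_color hp hζ hgcard hL (fun e => hLg e.symm) (Subgroup.mem_zpowers g) hg1 hxl hxl1
  have : ∀ a b c : Fin 2, a ≠ b → a ≠ c → b ≠ c → False := by decide
  exact this _ _ _ d1 d2 d3
end

section
/- If G is a finite group of order at least 3 with exactly 1 maximal involution, then the rainbow connection number of the power graph Γ_G equals 3. -/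
section Aux

open Subgroup
set_option linter.unusedSectionVars false
set_option maxHeartbeats 1000000

variable {G : Type*} [Group G] [Fintype G]

lemma mem_zpowers_of_orderTwo {x : G} (hx : orderOf x = 2) {w : G} :
    w ∈ Subgroup.zpowers x ↔ w = 1 ∨ w = x := by
  constructor
  · intro hw
    obtain ⟨k, hk⟩ := Subgroup.mem_zpowers_iff.mp hw
    subst hk
    rw [← zpow_mod_orderOf, hx]
    push_cast
    have : k % 2 = 0 ∨ k % 2 = 1 := by omega
    rcases this with h | h <;> rw [h] <;> simp
  · rintro (rfl | rfl)
    · exact one_mem _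
    · exact Subgroup.mem_zpowers _

lemma invol_eq_of_mem_zpowers {w u v : G} (hu : u ∈ Subgroup.zpowers w)
    (hv : v ∈ Subgroup.zpowers w) (hu2 : orderOf u = 2) (hv2 : orderOf v = 2) : u = v := by
  have hd0 : orderOf w ≠ 0 := (orderOf_pos w).ne'
  have hkey : ∀ z : G, z ∈ Subgroup.zpowers w → orderOf z = 2 → z = w ^ (orderOf w / 2) := by
    intro z hz h2
    rw [← mem_powers_iff_mem_zpowers] at hz
    obtain ⟨n, hn⟩ := hz
    subst hn
    beta_reduce at h2 ⊢
    have horig := h2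
    rw [orderOf_pow] at h2
    set d := orderOf w with hd
    set m := d.gcd n with hm
    have hgd : m ∣ d := Nat.gcd_dvd_left _ _
    have hmul : m * (d / m) = d := Nat.mul_div_cancel' hgd
    rw [h2] at hmul
    have hdm : d = 2 * m := by omega
    have hm2 : m = d / 2 := by omega
    obtain ⟨s, hs⟩ : m ∣ n := Nat.gcd_dvd_right _ _
    have hordm : orderOf (w ^ m) = 2 := by
      rw [orderOf_pow]
      have : Nat.gcd d m = m := Nat.gcd_comm d m ▸ Nat.gcd_eq_left ⟨2, by omega⟩
      rw [← hd, this]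
      omega
    have hmod : (w ^ m) ^ s = (w ^ m) ^ (s % 2) := by
      rw [← hordm, pow_mod_orderOf]
    have hs2 : s % 2 = 0 ∨ s % 2 = 1 := by omega
    rcases hs2 with hpar | hpar
    · exfalso
      have hone : w ^ n = 1 := by rw [hs, pow_mul, hmod, hpar, pow_zero]
      rw [hone] at horig
      simp at horig
    · rw [hs, pow_mul, hmod, hpar, pow_one, hm2]
  rw [hkey u hu hu2, hkey v hv hv2]

lemma conj_maximalInvolution {x : G} (hx : orderOf x = 2 ∧ ∀ g : G, x ∈ Subgroup.zpowers g → Subgroup.zpowers g = Subgroup.zpowers x) (g : G) :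
    orderOf (g * x * g⁻¹) = 2 ∧ ∀ t : G, (g * x * g⁻¹) ∈ Subgroup.zpowers t → Subgroup.zpowers t = Subgroup.zpowers (g * x * g⁻¹) := by
  have hord : orderOf (g * x * g⁻¹) = 2 := by
    have := orderOf_injective (MulAut.conj g).toMonoidHom (MulEquiv.injective _) x
    simpa using this.trans hx.1
  refine ⟨hord, ?_⟩
  intro t ht
  obtain ⟨k, hk⟩ := Subgroup.mem_zpowers_iff.mp ht
  have hxk : (g⁻¹ * t * g) ^ k = x := by
    have h1 : (g⁻¹ * t * g⁻¹⁻¹) ^ k = g⁻¹ * t ^ k * g⁻¹⁻¹ := conj_zpow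
    rw [inv_inv] at h1
    rw [h1, hk]
    group
  have hmem : x ∈ Subgroup.zpowers (g⁻¹ * t * g) := Subgroup.mem_zpowers_iff.mpr ⟨k, hxk⟩
  have heq := hx.2 _ hmem
  have hconj : ∀ s w : G, w ∈ Subgroup.zpowers s ↔ (g⁻¹ * w * g) ∈ Subgroup.zpowers (g⁻¹ * s * g) := by
    intro s w
    constructor
    · intro hw
      obtain ⟨j, hj⟩ := Subgroup.mem_zpowers_iff.mp hw
      refine Subgroup.mem_zpowers_iff.mpr ⟨j, ?_⟩
      have h1 : (g⁻¹ * s * g⁻¹⁻¹) ^ j = g⁻¹ * s ^ j * g⁻¹⁻¹ := conj_zpow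
      rw [inv_inv] at h1
      rw [h1, hj]
    · intro hw
      obtain ⟨j, hj⟩ := Subgroup.mem_zpowers_iff.mp hw
      refine Subgroup.mem_zpowers_iff.mpr ⟨j, ?_⟩
      have h1 : (g⁻¹ * s * g⁻¹⁻¹) ^ j = g⁻¹ * s ^ j * g⁻¹⁻¹ := conj_zpow
      rw [inv_inv] at h1
      rw [h1] at hj
      have h2 := congrArg (fun z => g * z * g⁻¹) hj
      have h3 : g * (g⁻¹ * s ^ j * g) * g⁻¹ = s ^ j := by group
      have h4 : g * (g⁻¹ * w * g) * g⁻¹ = w := by group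
      rw [h3, h4] at h2
      exact h2
  ext w
  have hgxg : g⁻¹ * (g * x * g⁻¹) * g = x := by group
  rw [hconj t w, heq, mem_zpowers_of_orderTwo hx.1, hconj (g * x * g⁻¹) w, hgxg,
      mem_zpowers_of_orderTwo hx.1]

lemma central_of_unique {x : G}
    (hx : orderOf x = 2 ∧ ∀ g : G, x ∈ Subgroup.zpowers g → Subgroup.zpowers g = Subgroup.zpowers x)
    (hxu : ∀ y : G, (orderOf y = 2 ∧ ∀ g : G, y ∈ Subgroup.zpowers g → Subgroup.zpowers g = Subgroup.zpowers y) → y = x)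
    (g : G) : g * x = x * g := by
  have h1 := hxu _ (conj_maximalInvolution hx g)
  calc g * x = (g * x * g⁻¹) * g := by group
  _ = x * g := by rw [h1]

lemma even_orderOf {x : G}
    (hx : orderOf x = 2 ∧ ∀ g : G, x ∈ Subgroup.zpowers g → Subgroup.zpowers g = Subgroup.zpowers x)
    (hc : ∀ g : G, g * x = x * g) {u : G} (hu : u ≠ 1) : Even (orderOf u) := by
  by_contra hodd
  rw [Nat.not_even_iff_odd] at hodd
  set d := orderOf u with hd
  have hd0 : d ≠ 0 := (orderOf_pos u).ne'
  have hd1 : d ≠ 1 := fun h1 => hu (orderOf_eq_one_iff.mp (hd ▸ h1))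
  have hp : (d.minFac).Prime := Nat.minFac_prime hd1
  have hpd : d.minFac ∣ d := Nat.minFac_dvd d
  set p := d.minFac with hpdef
  have hpodd : p % 2 = 1 := by
    rcases hp.eq_two_or_odd with h2 | h1
    · exfalso
      obtain ⟨c, hc'⟩ := hpd
      rw [h2] at hc'
      have := Nat.odd_iff.mp hodd
      omega
    · exact h1
  set y := u ^ (d / p) with hy
  have hyp : orderOf y = p := by
    rw [hy, orderOf_pow, ← hd]
    have hdvd : d / p ∣ d := ⟨p, (Nat.div_mul_cancel hpd).symm⟩
    rw [Nat.gcd_comm, Nat.gcd_eq_left hdvd]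
    exact Nat.div_div_self hpd hd0
  have hcom : Commute x y := (hc y).symm
  have hzp : (x * y) ^ p = x := by
    rw [hcom.mul_pow]
    have hy1 : y ^ p = 1 := by rw [← hyp]; exact pow_orderOf_eq_one y
    have hx1 : x ^ p = x := by
      rw [← pow_mod_orderOf, hx.1, hpodd, pow_one]
    rw [hy1, hx1, mul_one]
  have hmemx : x ∈ Subgroup.zpowers (x * y) :=
    Subgroup.mem_zpowers_iff.mpr ⟨(p : ℤ), by rw [zpow_natCast, hzp]⟩
  have heq := hx.2 _ hmemx
  have hz : x * y ∈ Subgroup.zpowers x := heq ▸ Subgroup.mem_zpowers _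
  rcases (mem_zpowers_of_orderTwo hx.1).mp hz with h1 | h1
  · have hyx : x = y⁻¹ := eq_inv_of_mul_eq_one_left h1
    have h5 : orderOf y = 2 := by rw [← hx.1, hyx, orderOf_inv]
    rw [hyp] at h5
    omega
  · have hy1 : y = 1 := by
      have := congrArg (fun z => x⁻¹ * z) h1
      simpa using this
    rw [hy1, orderOf_one] at hyp
    exact absurd hyp.symm (Nat.Prime.ne_one hp)

lemma powerGraph_adj {u v : G} :
    (powerGraph G).Adj u v ↔ u ≠ v ∧ (u ∈ Subgroup.zpowers v ∨ v ∈ Subgroup.zpowers u) :=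
  Iff.rfl

lemma one_adj {v : G} (hv : v ≠ 1) : (powerGraph G).Adj 1 v :=
  ⟨fun h => hv h.symm, Or.inl (one_mem _)⟩

/-- Existence of two distinct involutions different from `x`. -/
lemma exists_two_invol {x : G} (hG : 3 ≤ Fintype.card G)
    (hx : orderOf x = 2 ∧ ∀ g : G, x ∈ Subgroup.zpowers g → Subgroup.zpowers g = Subgroup.zpowers x)
    (hc : ∀ g : G, g * x = x * g)
    (heven : ∀ u : G, u ≠ 1 → Even (orderOf u)) :
    ∃ u v : G, u ≠ v ∧ u ≠ x ∧ v ≠ x ∧ u ≠ 1 ∧ v ≠ 1 ∧ orderOf u = 2 ∧ orderOf v = 2 := by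
  classical
  have hx1 : x ≠ 1 := by
    intro h; rw [h, orderOf_one] at hx; exact absurd hx.1 (by norm_num)
  -- find g ∉ {1, x}
  have hg : ∃ g : G, g ≠ 1 ∧ g ≠ x := by
    by_contra hno
    push_neg at hno
    have hsub : (Finset.univ : Finset G) ⊆ {1, x} := by
      intro g _
      rcases Classical.em (g = 1) with h | h
      · simp [h]
      · simp [hno g h]
    have := Finset.card_le_card hsub
    have h2 : ({1, x} : Finset G).card ≤ 2 := Finset.card_insert_le _ _ |>.trans (by simp)
    rw [Finset.card_univ] at this
    omega
  obtain ⟨g, hg1, hgx⟩ := hg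
  -- produce an involution t ≠ x
  have ht : ∃ t : G, t ≠ x ∧ orderOf t = 2 := by
    rcases Classical.em (orderOf g = 2) with h2 | h2
    · exact ⟨g, hgx, h2⟩
    · have hev := heven g hg1
      have hd0 : orderOf g ≠ 0 := (orderOf_pos g).ne'
      set t := g ^ (orderOf g / 2) with htdef
      have ht2 : orderOf t = 2 := by
        rw [htdef, orderOf_pow]
        obtain ⟨m, hm⟩ := hev
        have hm0 : m ≠ 0 := by omega
        have hdvd : orderOf g / 2 ∣ orderOf g := ⟨2, by omega⟩
        rw [Nat.gcd_comm, Nat.gcd_eq_left hdvd]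
        exact Nat.div_div_self ⟨m, by omega⟩ hd0
      refine ⟨t, ?_, ht2⟩
      intro htx
      have hmem : x ∈ Subgroup.zpowers g := by
        rw [← htx]
        exact Subgroup.mem_zpowers_iff.mpr ⟨((orderOf g / 2 : ℕ) : ℤ), by rw [zpow_natCast]⟩
      have heq := hx.2 g hmem
      have : g ∈ Subgroup.zpowers x := heq ▸ Subgroup.mem_zpowers g
      rcases (mem_zpowers_of_orderTwo hx.1).mp this with h | h
      · exact hg1 h
      · exact hgx h
  obtain ⟨t, htx, ht2⟩ := ht
  have ht1 : t ≠ 1 := by intro h; rw [h, orderOf_one] at ht2; exact absurd ht2 (by norm_num)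
  have hxx : x * x = 1 := by
    have := pow_orderOf_eq_one x
    rwa [hx.1, pow_two] at this
  refine ⟨t, x * t, ?_, htx, ?_, ht1, ?_, ht2, ?_⟩
  · intro h
    exact hx1 (mul_right_cancel (show x * t = 1 * t by rw [one_mul, ← h]))
  · intro h
    exact ht1 (mul_left_cancel (show x * t = x * 1 by rw [mul_one, h]))
  · intro h
    have hx' : t = x⁻¹ := eq_inv_of_mul_eq_one_right h
    have : x⁻¹ = x := by
      rw [inv_eq_iff_mul_eq_one, hxx]
    rw [this] at hx'
    exact htx hx'
  · have hcom : Commute x t := (hc t).symm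
    have hsq : (x * t) ^ 2 = 1 := by
      rw [hcom.mul_pow]
      have : t ^ 2 = 1 := by rw [← ht2]; exact pow_orderOf_eq_one t
      rw [pow_two, hxx, this, one_mul]
    have hne : x * t ≠ 1 := by
      intro h
      have hx' : t = x⁻¹ := eq_inv_of_mul_eq_one_right h
      have h9 : x⁻¹ = x := by rw [inv_eq_iff_mul_eq_one, hxx]
      rw [h9] at hx'
      exact htx hx'
    haveI : Fact (Nat.Prime 2) := ⟨Nat.prime_two⟩
    exact orderOf_eq_prime hsq hne

open Classical in
noncomputable def col (x v : G) : Fin 3 := if v ≠ x ∧ orderOf v = 2 then 0 else 1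

open Classical in
noncomputable def zeta (x : G) : Sym2 G → Fin 3 :=
  Sym2.lift ⟨fun a b => if a = 1 then col x b else if b = 1 then col x a else 2, by
    intro a b
    by_cases ha : a = 1 <;> by_cases hb : b = 1 <;> simp [ha, hb]⟩

lemma zeta_one (x v : G) : zeta x s(1, v) = col x v := by simp [zeta]

lemma zeta_one' (x u : G) : zeta x s(u, 1) = col x u := by
  rw [Sym2.eq_swap]; exact zeta_one x u

lemma zeta_two (x : G) {u v : G} (hu : u ≠ 1) (hv : v ≠ 1) : zeta x s(u, v) = 2 := by
  simp [zeta, hu, hv]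

lemma col_x (x : G) : col x x = 1 := by simp [col]

lemma col_invol {x v : G} (hvx : v ≠ x) (hv2 : orderOf v = 2) : col x v = 0 := by
  simp [col, hvx, hv2]

lemma col_other {x v : G} (hv2 : orderOf v ≠ 2) : col x v = 1 := by
  simp [col, hv2]

lemma col_eq_zero {x v : G} (h : col x v = 0) : v ≠ x ∧ orderOf v = 2 := by
  by_contra hC
  rw [col, if_neg hC] at h
  exact absurd h (by decide)

lemma rainbow_zeta {x : G} (hG : 3 ≤ Fintype.card G)
    (hx : orderOf x = 2 ∧ ∀ g : G, x ∈ Subgroup.zpowers g → Subgroup.zpowers g = Subgroup.zpowers x)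
    (hxu : ∀ y : G, (orderOf y = 2 ∧ ∀ g : G, y ∈ Subgroup.zpowers g → Subgroup.zpowers g = Subgroup.zpowers y) → y = x)
    (heven : ∀ u : G, u ≠ 1 → Even (orderOf u)) :
    ∀ u v : G, ∃ p : (powerGraph G).Walk u v, p.IsPath ∧ (p.edges.map (zeta x)).Nodup := by
  classical
  have hx1 : x ≠ 1 := by
    intro h; rw [h, orderOf_one] at hx; exact absurd hx.1 (by norm_num)
  -- half-power helper
  have hhalf : ∀ v : G, v ≠ 1 → v ≠ x → orderOf v ≠ 2 →
      ∃ w : G, w ∈ Subgroup.zpowers v ∧ orderOf w = 2 ∧ w ≠ x ∧ w ≠ 1 ∧ w ≠ v := by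
    intro v hv1 hvx hv2
    have hev := heven v hv1
    have hd0 : orderOf v ≠ 0 := (orderOf_pos v).ne'
    set w := v ^ (orderOf v / 2) with hwdef
    have hwmem : w ∈ Subgroup.zpowers v :=
      Subgroup.mem_zpowers_iff.mpr ⟨((orderOf v / 2 : ℕ) : ℤ), by rw [zpow_natCast]⟩
    have hw2 : orderOf w = 2 := by
      rw [hwdef, orderOf_pow]
      obtain ⟨m, hm⟩ := hev
      have hdvd : orderOf v / 2 ∣ orderOf v := ⟨2, by omega⟩
      rw [Nat.gcd_comm, Nat.gcd_eq_left hdvd]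
      exact Nat.div_div_self ⟨m, by omega⟩ hd0
    refine ⟨w, hwmem, hw2, ?_, ?_, ?_⟩
    · intro h
      have hmem : x ∈ Subgroup.zpowers v := h ▸ hwmem
      have heq := hx.2 v hmem
      have : v ∈ Subgroup.zpowers x := heq ▸ Subgroup.mem_zpowers v
      rcases (mem_zpowers_of_orderTwo hx.1).mp this with h' | h'
      · exact hv1 h'
      · exact hvx h'
    · intro h; rw [h, orderOf_one] at hw2; exact absurd hw2 (by norm_num)
    · intro h; rw [h] at hw2; exact hv2 hw2
  -- path builders
  have path2 : ∀ {a b c : G}, (powerGraph G).Adj a b → (powerGraph G).Adj b c → a ≠ c →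
      zeta x s(a, b) ≠ zeta x s(b, c) →
      ∃ p : (powerGraph G).Walk a c, p.IsPath ∧ (p.edges.map (zeta x)).Nodup := by
    intro a b c h1 h2 hac hcol
    refine ⟨.cons h1 (.cons h2 .nil), ?_, ?_⟩
    · simp [SimpleGraph.Walk.isPath_def, h1.ne, h2.ne, hac]
    · simp [hcol]
  have path3 : ∀ {a b c d : G}, (powerGraph G).Adj a b → (powerGraph G).Adj b c →
      (powerGraph G).Adj c d → a ≠ c → a ≠ d → b ≠ d →
      zeta x s(a, b) ≠ zeta x s(b, c) → zeta x s(a, b) ≠ zeta x s(c, d) →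
      zeta x s(b, c) ≠ zeta x s(c, d) →
      ∃ p : (powerGraph G).Walk a d, p.IsPath ∧ (p.edges.map (zeta x)).Nodup := by
    intro a b c d h1 h2 h3 hac had hbd hc1 hc2 hc3
    refine ⟨.cons h1 (.cons h2 (.cons h3 .nil)), ?_, ?_⟩
    · simp [SimpleGraph.Walk.isPath_def, h1.ne, h2.ne, h3.ne, hac, had, hbd]
    · simp [hc1, hc2, hc3]
  -- main case analysis
  intro u v
  by_cases huv : u = v
  · subst huv
    exact ⟨.nil, by simp, by simp⟩
  by_cases hadj : (powerGraph G).Adj u v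
  · refine ⟨.cons hadj .nil, ?_, ?_⟩
    · simp [SimpleGraph.Walk.isPath_def, huv]
    · simp
  have hu1 : u ≠ 1 := by
    intro h; subst h; exact hadj (one_adj (fun hv => huv hv.symm))
  have hv1 : v ≠ 1 := by
    intro h; subst h; exact hadj ((one_adj huv).symm)
  by_cases hcol : col x u = col x v
  · by_cases h0 : col x u = 0
    · -- both involutions ≠ x
      obtain ⟨hux, hu2⟩ := col_eq_zero h0
      obtain ⟨hvx, hv2⟩ := col_eq_zero (hcol ▸ h0)
      have hnm : ¬ ∀ g : G, u ∈ Subgroup.zpowers g → Subgroup.zpowers g = Subgroup.zpowers u :=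
        fun hall => hux (hxu u ⟨hu2, hall⟩)
      push_neg at hnm
      obtain ⟨g, hg, hgne⟩ := hnm
      have hg1 : g ≠ 1 := by
        rintro rfl
        rw [Subgroup.zpowers_one_eq_bot, Subgroup.mem_bot] at hg
        exact hu1 hg
      have hgu : u ≠ g := by rintro rfl; exact hgne rfl
      have hg2 : orderOf g ≠ 2 := by
        intro h2
        rcases (mem_zpowers_of_orderTwo h2).mp hg with h' | h'
        · exact hu1 h'
        · exact hgu h'
      have hgv : g ≠ v := by
        rintro rfl
        rcases (mem_zpowers_of_orderTwo hv2).mp hg with h' | h'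
        · exact hu1 h'
        · exact huv h'
      refine path3 (a := u) (b := g) (c := 1) (d := v)
        ⟨hgu, Or.inl hg⟩ ((one_adj hg1).symm) (one_adj hv1) hu1 huv hgv ?_ ?_ ?_
      · rw [zeta_two x hu1 hg1, zeta_one' x g, col_other hg2]; decide
      · rw [zeta_two x hu1 hg1, zeta_one x v, col_invol hvx hv2]; decide
      · rw [zeta_one' x g, col_other hg2, zeta_one x v, col_invol hvx hv2]; decide
    · -- col u = col v = 1
      by_cases hux : u = x
      · have hvx : v ≠ x := fun hh => huv (hux.trans hh.symm)
        have hv2 : orderOf v ≠ 2 := by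
          intro h2
          have h1 : col x v = 1 := by rw [← hcol, hux, col_x]
          rw [col_invol hvx h2] at h1
          exact absurd h1 (by decide)
        obtain ⟨w, hwmem, hw2, hwx, hw1, hwv⟩ := hhalf v hv1 hvx hv2
        have huw : u ≠ w := fun hh => hwx (hh.symm.trans hux)
        refine path3 (a := u) (b := 1) (c := w) (d := v)
          ((one_adj hu1).symm) (one_adj hw1) ⟨hwv, Or.inl hwmem⟩ huw huv (fun hh => hv1 hh.symm) ?_ ?_ ?_
        · rw [zeta_one' x u, hux, col_x, zeta_one x w, col_invol hwx hw2]; decide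
        · rw [zeta_one' x u, hux, col_x, zeta_two x hw1 hv1]; decide
        · rw [zeta_one x w, col_invol hwx hw2, zeta_two x hw1 hv1]; decide
      · have hu2 : orderOf u ≠ 2 := by
          intro h2
          rw [col_invol hux h2] at h0
          exact h0 rfl
        obtain ⟨w, hwmem, hw2, hwx, hw1, hwu⟩ := hhalf u hu1 hux hu2
        by_cases hvx : v = x
        · have hwv : w ≠ v := fun hh => hwx (hh.trans hvx)
          refine path3 (a := u) (b := w) (c := 1) (d := v)
            ⟨fun hh => hwu hh.symm, Or.inr hwmem⟩ ((one_adj hw1).symm) (one_adj hv1)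
            hu1 huv hwv ?_ ?_ ?_
          · rw [zeta_two x hu1 hw1, zeta_one' x w, col_invol hwx hw2]; decide
          · rw [zeta_two x hu1 hw1, zeta_one x v, hvx, col_x]; decide
          · rw [zeta_one' x w, col_invol hwx hw2, zeta_one x v, hvx, col_x]; decide
        · have hv2 : orderOf v ≠ 2 := by
            intro h2
            rw [hcol, col_invol hvx h2] at h0
            exact h0 rfl
          have hwv : w ≠ v := by
            intro hh
            rw [hh] at hw2
            exact hv2 hw2
          refine path3 (a := u) (b := w) (c := 1) (d := v)
            ⟨fun hh => hwu hh.symm, Or.inr hwmem⟩ ((one_adj hw1).symm) (one_adj hv1)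
            hu1 huv hwv ?_ ?_ ?_
          · rw [zeta_two x hu1 hw1, zeta_one' x w, col_invol hwx hw2]; decide
          · rw [zeta_two x hu1 hw1, zeta_one x v, col_other hv2]; decide
          · rw [zeta_one' x w, col_invol hwx hw2, zeta_one x v, col_other hv2]; decide
  · exact path2 ((one_adj hu1).symm) (one_adj hv1) huv
      (by rw [zeta_one' x u, zeta_one x v]; exact hcol)

end Aux

section Aux2
open Subgroup
set_option linter.unusedSectionVars false
set_option maxHeartbeats 1000000
variable {G : Type*} [Group G] [Fintype G]

lemma adj_x {x : G} (hx : IsMaximalInvolution x) {w : G}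
    (hw : (powerGraph G).Adj x w) : w = 1 := by
  rcases hw.2 with hm | hm
  · have heq := hx.2 w hm
    have : w ∈ Subgroup.zpowers x := heq ▸ Subgroup.mem_zpowers w
    rcases (mem_zpowers_of_orderTwo hx.1).mp this with h' | h'
    · exact h'
    · exact absurd h'.symm hw.1
  · rcases (mem_zpowers_of_orderTwo hx.1).mp hm with h' | h'
    · exact h'
    · exact absurd h'.symm hw.1

lemma no_rainbow_two {x : G} (hG : 3 ≤ Fintype.card G) (hx : IsMaximalInvolution x)
    (hxu : ∀ y : G, IsMaximalInvolution y → y = x)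
    (ζ : Sym2 G → Fin 2) (hζ : IsRainbowColoring (powerGraph G) ζ) : False := by
  classical
  have hc := central_of_unique hx hxu
  have heven : ∀ u : G, u ≠ 1 → Even (orderOf u) := fun u hu => even_orderOf hx hc hu
  -- every e-edge other than {x,1} avoids the color of {x,1}
  have key : ∀ v : G, v ≠ 1 → v ≠ x → ζ s(1, v) ≠ ζ s(x, 1) := by
    intro v hv1 hvx
    obtain ⟨p, hp, hn⟩ := hζ x v
    cases p with
    | nil => exact absurd rfl hvx
    | cons h q =>
      rename_i w
      have hw : w = 1 := adj_x hx h
      subst hw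
      cases q with
      | nil => exact absurd rfl hv1
      | cons h2 q2 =>
        rename_i w2
        cases q2 with
        | nil =>
          simp only [SimpleGraph.Walk.edges_cons, SimpleGraph.Walk.edges_nil,
            List.map_cons, List.map_nil, List.nodup_cons, List.mem_cons,
            List.mem_singleton, List.not_mem_nil, or_false, not_false_iff,
            List.nodup_nil, and_true, List.mem_singleton] at hn
          exact fun hEq => hn hEq.symm
        | cons h3 q3 =>
          exfalso
          have hlen := hn.length_le_card
          simp only [List.length_map, SimpleGraph.Walk.edges_cons, List.length_cons,
            Fintype.card_fin] at hlen
          omega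
  obtain ⟨u, v, huv, hux, hvx, hu1, hv1, hu2, hv2⟩ := exists_two_invol hG hx hc heven
  have h1 := key u hu1 hux
  have h2 := key v hv1 hvx
  have hnotadj : ¬ (powerGraph G).Adj u v := by
    rintro ⟨hne, hm | hm⟩
    · rcases (mem_zpowers_of_orderTwo hv2).mp hm with h' | h'
      · exact hu1 h'
      · exact hne h'
    · rcases (mem_zpowers_of_orderTwo hu2).mp hm with h' | h'
      · exact hv1 h'
      · exact hne h'.symm
  obtain ⟨p, hp, hn⟩ := hζ u v
  cases p with
  | nil => exact huv rfl
  | cons ha q =>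
    rename_i w
    cases q with
    | nil => exact hnotadj ha
    | cons ha2 q2 =>
      rename_i w2
      cases q2 with
      | nil =>
        have hw1 : w = 1 := by
          rcases ha.2 with hm | hm
          · rcases ha2.2 with hm2 | hm2
            · rcases (mem_zpowers_of_orderTwo hv2).mp hm2 with h' | h'
              · exact h'
              · exact absurd h' ha2.ne
            · exact absurd (invol_eq_of_mem_zpowers hm hm2 hu2 hv2) huv
          · rcases (mem_zpowers_of_orderTwo hu2).mp hm with h' | h'
            · exact h'
            · exact absurd h'.symm ha.ne
        subst hw1
        simp only [SimpleGraph.Walk.edges_cons, SimpleGraph.Walk.edges_nil,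
          List.map_cons, List.map_nil, List.nodup_cons, List.mem_cons,
          List.mem_singleton, List.not_mem_nil, or_false, not_false_iff,
          List.nodup_nil, and_true] at hn
        have hne : ζ s(1, u) ≠ ζ s(1, v) := by
          rw [Sym2.eq_swap]
          exact hn
        have hfin : ∀ a b c : Fin 2, a ≠ c → b ≠ c → a ≠ b → False := by decide
        exact hfin _ _ _ h1 h2 hne
      | cons h3 q3 =>
        have hlen := hn.length_le_card
        simp only [List.length_map, SimpleGraph.Walk.edges_cons, List.length_cons,
          Fintype.card_fin] at hlen
        omega


end Aux2

theorem rc_powerGraph_eq_three_of_one_maximalInvolution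
    (G : Type*) [Group G] [Fintype G] (hG : 3 ≤ Fintype.card G)
    (h : Nat.card {x : G // IsMaximalInvolution x} = 1) :
    rainbowConnection (powerGraph G) = 3 := by
  classical
  rw [Nat.card_eq_one_iff_unique] at h
  obtain ⟨hsub, ⟨⟨x, hx⟩⟩⟩ := h
  have hxu : ∀ y : G, IsMaximalInvolution y → y = x := fun y hy =>
    congrArg Subtype.val (hsub.allEq ⟨y, hy⟩ ⟨x, hx⟩)
  have hc := central_of_unique hx hxu
  have heven : ∀ u : G, u ≠ 1 → Even (orderOf u) := fun u hu => even_orderOf hx hc hu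
  have hub : 3 ∈ {k : ℕ | ∃ ζ : Sym2 G → Fin k, IsRainbowColoring (powerGraph G) ζ} :=
    ⟨zeta x, rainbow_zeta hG hx hxu heven⟩
  apply le_antisymm
  · exact Nat.sInf_le hub
  · refine le_csInf ⟨3, hub⟩ ?_
    intro k hk
    by_contra hlt
    push_neg at hlt
    obtain ⟨ζ, hζ⟩ := hk
    have hk2 : k ≤ 2 := by omega
    refine no_rainbow_two hG hx hxu (fun s => Fin.castLE hk2 (ζ s)) ?_
    intro u v
    obtain ⟨p, hp, hn⟩ := hζ u v
    refine ⟨p, hp, ?_⟩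
    have : (p.edges.map fun s => Fin.castLE hk2 (ζ s)) =
        (p.edges.map ζ).map (Fin.castLE hk2) := by
      rw [List.map_map]
      rfl
    rw [this]
    exact hn.map (Fin.castLE_injective hk2)
end

section
/- For every integer n ≥ 3, the rainbow connection number of the power graph of the dihedral group D_{2n} of order 2n equals n. -/
namespace RCDihedralAux
open DihedralGroup Subgroup SimpleGraph

variable {n : ℕ}

lemma r_pow' (a : ZMod n) (m : ℕ) : (r a : DihedralGroup n) ^ m = r ((m : ZMod n) * a) := by
  induction m with
  | zero => simp
  | succ k ih => rw [pow_succ, ih, r_mul_r]; push_cast; ring_nf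

lemma sr_not_mem_zpowers_r [NeZero n] (i a : ZMod n) :
    sr i ∉ Subgroup.zpowers (r a) := by
  intro h
  rw [← mem_powers_iff_mem_zpowers] at h
  obtain ⟨m, hm⟩ := h
  change _ ^ _ = _ at hm
  rw [r_pow'] at hm
  exact absurd hm (by simp)

lemma mem_zpowers_sr [NeZero n] {x : DihedralGroup n} {i : ZMod n}
    (h : x ∈ Subgroup.zpowers (sr i)) : x = 1 ∨ x = sr i := by
  rw [← mem_powers_iff_mem_zpowers] at h
  obtain ⟨m, hm⟩ := h
  change _ ^ _ = _ at hm
  rw [← pow_mod_orderOf, orderOf_sr] at hm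
  have h2 : m % 2 < 2 := Nat.mod_lt _ (by norm_num)
  interval_cases h' : m % 2 <;> simp_all [pow_succ]

/-- the only neighbour of a reflection is the identity -/
lemma adj_sr [NeZero n] {i : ZMod n} {y : DihedralGroup n}
    (h : (powerGraph (DihedralGroup n)).Adj (sr i) y) : y = r 0 := by
  obtain ⟨hne, hmem | hmem⟩ := h
  · cases y with
    | r a => exact absurd hmem (sr_not_mem_zpowers_r i a)
    | sr j =>
      rcases mem_zpowers_sr hmem with h1 | h1
      · exact absurd h1 (by rw [one_def]; exact fun e => by cases e)
      · cases h1; exact absurd rfl hne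
  · rcases mem_zpowers_sr hmem with h1 | h1
    · rw [h1, one_def]
    · exact absurd h1.symm hne

lemma adj_r_r_one [NeZero n] (a : ZMod n) (h : a ≠ 1) :
    (powerGraph (DihedralGroup n)).Adj (r a) (r 1) := by
  refine ⟨by simp [h], Or.inl ⟨(a.val : ℤ), ?_⟩⟩
  show (r 1 : DihedralGroup n) ^ ((a.val : ℕ) : ℤ) = r a
  rw [zpow_natCast, r_one_pow]
  simp [ZMod.natCast_val, ZMod.cast_id]

lemma adj_r_zero (x : DihedralGroup n) (h : x ≠ r 0) :
    (powerGraph (DihedralGroup n)).Adj (r 0) x :=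
  ⟨fun e => h e.symm, Or.inl (by rw [← one_def]; exact Subgroup.one_mem _)⟩

/-- the color of an element of `ZMod n` as a `Fin n` -/
def finOf [NeZero n] (x : ZMod n) : Fin n := ⟨x.val, x.val_lt⟩

lemma finOf_inj [NeZero n] {x y : ZMod n} : finOf x = finOf y ↔ x = y := by
  constructor
  · intro h
    have := congrArg Fin.val h
    exact ZMod.val_injective n (by simpa [finOf] using this)
  · rintro rfl; rfl

/-- The coloring function. -/
def col [NeZero n] : DihedralGroup n → DihedralGroup n → Fin n
  | .r a, .r b =>
      if a = 1 then finOf b else if b = 1 then finOf a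
      else if a = 0 then 1 else if b = 0 then 1 else 0
  | .r a, .sr i => if a = 0 then finOf i else 0
  | .sr i, .r a => if a = 0 then finOf i else 0
  | .sr _, .sr _ => 0

lemma col_symm [NeZero n] (x y : DihedralGroup n) : col x y = col y x := by
  cases x <;> cases y <;> simp only [col] <;> split_ifs <;> simp_all


section Upper
variable (n : ℕ) [NeZero n]

/-- The rainbow coloring. -/
def zeta : Sym2 (DihedralGroup n) → Fin n := Sym2.lift ⟨col, col_symm⟩

variable {n}

lemma zeta_mk (x y : DihedralGroup n) : zeta n s(x, y) = col x y := rfl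

lemma finOf_zero : finOf (0 : ZMod n) = 0 := by
  apply Fin.ext; simp [finOf]

lemma finOf_one (hn : 3 ≤ n) : finOf (1 : ZMod n) = 1 := by
  apply Fin.ext
  simp [finOf, ZMod.val_one_eq_one_mod, Fin.val_one']

lemma finOf_eq_zero {x : ZMod n} : finOf x = 0 ↔ x = 0 := by
  rw [← finOf_zero, finOf_inj]

lemma finOf_eq_one (hn : 3 ≤ n) {x : ZMod n} : finOf x = 1 ↔ x = 1 := by
  rw [← finOf_one hn, finOf_inj]

lemma cast_ne (hn : 3 ≤ n) {a b : ℕ} (ha : a < n) (hb : b < n) (h : a ≠ b) :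
    (a : ZMod n) ≠ (b : ZMod n) := fun e => h (by
  have := congrArg ZMod.val e
  rwa [ZMod.val_cast_of_lt ha, ZMod.val_cast_of_lt hb] at this)

lemma rainbow_one {x y : DihedralGroup n} (h1 : (powerGraph (DihedralGroup n)).Adj x y) :
    ∃ p : (powerGraph (DihedralGroup n)).Walk x y, p.IsPath ∧ (p.edges.map (zeta n)).Nodup := by
  refine ⟨.cons h1 .nil, ?_, ?_⟩
  · simp [SimpleGraph.Walk.isPath_def, h1.ne]
  · simp

lemma rainbow_two {x y z : DihedralGroup n} (h1 : (powerGraph (DihedralGroup n)).Adj x y)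
    (h2 : (powerGraph (DihedralGroup n)).Adj y z) (hxz : x ≠ z)
    (hc : zeta n s(x, y) ≠ zeta n s(y, z)) :
    ∃ p : (powerGraph (DihedralGroup n)).Walk x z, p.IsPath ∧ (p.edges.map (zeta n)).Nodup := by
  refine ⟨.cons h1 (.cons h2 .nil), ?_, ?_⟩
  · simp [SimpleGraph.Walk.isPath_def, h1.ne, h2.ne, hxz]
  · simp [hc]

lemma rainbow_three {w x y z : DihedralGroup n} (h1 : (powerGraph (DihedralGroup n)).Adj w x)
    (h2 : (powerGraph (DihedralGroup n)).Adj x y) (h3 : (powerGraph (DihedralGroup n)).Adj y z)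
    (hwy : w ≠ y) (hwz : w ≠ z) (hxz : x ≠ z)
    (hc1 : zeta n s(w, x) ≠ zeta n s(x, y)) (hc2 : zeta n s(w, x) ≠ zeta n s(y, z))
    (hc3 : zeta n s(x, y) ≠ zeta n s(y, z)) :
    ∃ p : (powerGraph (DihedralGroup n)).Walk w z, p.IsPath ∧ (p.edges.map (zeta n)).Nodup := by
  refine ⟨.cons h1 (.cons h2 (.cons h3 .nil)), ?_, ?_⟩
  · simp [SimpleGraph.Walk.isPath_def, h1.ne, h2.ne, h3.ne, hwy, hwz, hxz]
  · simp [hc1, hc2, hc3]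

lemma rainbow_rev {u v : DihedralGroup n}
    (h : ∃ p : (powerGraph (DihedralGroup n)).Walk u v, p.IsPath ∧ (p.edges.map (zeta n)).Nodup) :
    ∃ p : (powerGraph (DihedralGroup n)).Walk v u, p.IsPath ∧ (p.edges.map (zeta n)).Nodup := by
  obtain ⟨p, hp, hc⟩ := h
  exact ⟨p.reverse, hp.reverse, by simpa [SimpleGraph.Walk.edges_reverse, List.map_reverse]⟩

lemma rainbow_sr_r (hn : 3 ≤ n) (h10 : (1 : ZMod n) ≠ 0) (h20 : (2 : ZMod n) ≠ 0)
    (h21 : (2 : ZMod n) ≠ 1) (i b : ZMod n) :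
    ∃ p : (powerGraph (DihedralGroup n)).Walk (sr i) (r b),
      p.IsPath ∧ (p.edges.map (zeta n)).Nodup := by
  by_cases hb0 : b = 0
  · subst hb0; exact rainbow_one ((adj_r_zero (sr i) (fun e => by cases e)).symm)
  by_cases hb1 : b = 1
  · subst hb1
    by_cases hi0 : i = 0
    · subst hi0
      refine rainbow_three ((adj_r_zero (sr 0) (fun e => by cases e)).symm)
        (adj_r_zero (r 2) (fun e => h20 (DihedralGroup.r.inj e))) (adj_r_r_one 2 h21)
        (by simp) (by simp) (fun e => h10 (DihedralGroup.r.inj e).symm) ?_ ?_ ?_ <;>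
          rw [zeta_mk, zeta_mk] <;>
          simp [col, h21, Ne.symm h10, finOf_inj, finOf_eq_zero, finOf_eq_one hn,
            eq_comm (a := (0 : Fin n)), eq_comm (a := (1 : Fin n)), h10, h20,
            Ne.symm h20, Ne.symm h21, Fin.zero_eq_one_iff] <;>
          omega
    · refine rainbow_two ((adj_r_zero (sr i) (fun e => by cases e)).symm)
        (adj_r_zero (r 1) (fun e => h10 (DihedralGroup.r.inj e))) (by simp) ?_
      rw [zeta_mk, zeta_mk]
      simp [col, Ne.symm h10, finOf_inj, hi0]
  · by_cases hi1 : i = 1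
    · subst hi1
      refine rainbow_three ((adj_r_zero (sr 1) (fun e => by cases e)).symm)
        (adj_r_zero (r 1) (fun e => h10 (DihedralGroup.r.inj e))) ((adj_r_r_one b hb1).symm)
        (by simp) (by simp) (fun e => hb0 (DihedralGroup.r.inj e).symm) ?_ ?_ ?_ <;>
          rw [zeta_mk, zeta_mk] <;>
          simp [col, finOf_inj, h10, Ne.symm h10, Ne.symm hb1, Ne.symm hb0, hb1, hb0]
    · refine rainbow_two ((adj_r_zero (sr i) (fun e => by cases e)).symm)
        (adj_r_zero (r b) (fun e => hb0 (DihedralGroup.r.inj e))) (by simp) ?_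
      rw [zeta_mk, zeta_mk]
      simp [col, hb0, hb1, Ne.symm h10, finOf_inj, ← finOf_one hn, hi1]

lemma isRainbow (hn : 3 ≤ n) : IsRainbowColoring (powerGraph (DihedralGroup n)) (zeta n) := by
  have h10 : (1 : ZMod n) ≠ 0 := by
    have := cast_ne hn (a := 1) (b := 0) (by omega) (by omega) (by omega); simpa using this
  have h20 : (2 : ZMod n) ≠ 0 := by
    have := cast_ne hn (a := 2) (b := 0) (by omega) (by omega) (by omega); simpa using this
  have h21 : (2 : ZMod n) ≠ 1 := by
    have := cast_ne hn (a := 2) (b := 1) (by omega) (by omega) (by omega); simpa using this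
  intro u v
  by_cases huv : u = v
  · subst huv; exact ⟨.nil, by simp, by simp⟩
  cases u with
  | r a =>
    cases v with
    | r b =>
      have hab : a ≠ b := fun e => huv (by rw [e])
      by_cases ha1 : a = 1
      · subst ha1
        exact rainbow_one ((adj_r_r_one b (fun e => hab e.symm)).symm)
      by_cases hb1 : b = 1
      · subst hb1
        exact rainbow_one (adj_r_r_one a ha1)
      · refine rainbow_two (adj_r_r_one a ha1) ((adj_r_r_one b hb1).symm) huv ?_
        rw [zeta_mk, zeta_mk]
        simp only [col, if_neg ha1, if_pos rfl, if_neg hb1]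
        simp [finOf_inj, hab]
    | sr i =>
      apply rainbow_rev
      exact rainbow_sr_r hn h10 h20 h21 i a
  | sr i =>
    cases v with
    | r b => exact rainbow_sr_r hn h10 h20 h21 i b
    | sr j =>
      have hij : i ≠ j := fun e => huv (by rw [e])
      refine rainbow_two ((adj_r_zero (sr i) (fun e => by cases e)).symm) (adj_r_zero (sr j) (fun e => by cases e)) (by simp [hij]) ?_
      rw [zeta_mk, zeta_mk]
      simp [col, finOf_inj, hij]

end Upper
section Lower
variable {n : ℕ} [NeZero n]

lemma first_edge_mem {i j : ZMod n} (hij : i ≠ j)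
    (p : (powerGraph (DihedralGroup n)).Walk (sr i) (sr j)) :
    s((sr i : DihedralGroup n), r 0) ∈ p.edges := by
  cases p with
  | nil => exact absurd rfl hij
  | cons h q =>
    have := adj_sr h
    subst this
    simp [-r_zero]

lemma lower_bound (hn : 3 ≤ n) {k : ℕ} (ζ : Sym2 (DihedralGroup n) → Fin k)
    (hζ : IsRainbowColoring (powerGraph (DihedralGroup n)) ζ) : n ≤ k := by
  have hinj : Function.Injective (fun i : ZMod n => ζ s((sr i : DihedralGroup n), r 0)) := by
    intro i j hij
    by_contra hne
    obtain ⟨p, hp, hnd⟩ := hζ (sr i) (sr j)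
    have m1 : s((sr i : DihedralGroup n), r 0) ∈ p.edges := first_edge_mem hne p
    have m2 : s((sr j : DihedralGroup n), r 0) ∈ p.edges := by
      have := first_edge_mem (Ne.symm hne) p.reverse
      simpa [SimpleGraph.Walk.edges_reverse] using this
    have := List.inj_on_of_nodup_map hnd m1 m2 hij
    simp only [Sym2.eq, Sym2.rel_iff', Prod.mk.injEq, Prod.swap_prod_mk] at this
    rcases this with ⟨h1, _⟩ | ⟨h1, _⟩ <;> simp_all
  calc n = Fintype.card (ZMod n) := by simp
    _ ≤ Fintype.card (Fin k) := Fintype.card_le_of_injective _ hinj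
    _ = k := by simp

end Lower
end RCDihedralAux



theorem rc_powerGraph_dihedral (n : ℕ) (hn : 3 ≤ n) :
    rainbowConnection (powerGraph (DihedralGroup n)) = n := by
  haveI : NeZero n := ⟨by omega⟩
  have hmem : n ∈ {k : ℕ | ∃ ζ : Sym2 (DihedralGroup n) → Fin k,
      IsRainbowColoring (powerGraph (DihedralGroup n)) ζ} :=
    ⟨RCDihedralAux.zeta n, RCDihedralAux.isRainbow hn⟩
  refine le_antisymm (Nat.sInf_le hmem) (le_csInf ⟨n, hmem⟩ ?_)
  rintro k ⟨ζ, hζ⟩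
  exact RCDihedralAux.lower_bound hn ζ hζ
end

section
/- If G is a finite cyclic group whose order is not a power of any prime, then the rainbow connection number of the power graph Γ_G equals 2. -/
section RainbowAux

open Subgroup

variable {G : Type*} [Group G] [Fintype G]

/-- In a finite cyclic group, divisibility of orders gives membership in cyclic subgroups. -/
lemma aux_mem_zpowers_of_orderOf_dvd (hcyc : IsCyclic G) {x y : G}
    (h : orderOf x ∣ orderOf y) : x ∈ Subgroup.zpowers y := by
  classical
  haveI := hcyc
  set d := orderOf y with hd
  have hd0 : 0 < d := orderOf_pos y
  have hle : (Finset.filter (fun a : G => a ^ d = 1) Finset.univ).card ≤ d :=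
    IsCyclic.card_pow_eq_one_le hd0
  set F : Finset G := Finset.filter (fun a : G => a ^ d = 1) Finset.univ with hF
  set T : Finset G := (zpowers y : Set G).toFinset with hT
  have hTcard : T.card = d := by
    simp only [hT, Set.toFinset_card, SetLike.coe_sort_coe]
    rw [Fintype.card_zpowers]
  have hsub : T ⊆ F := by
    intro a ha
    rw [hT, Set.mem_toFinset] at ha
    obtain ⟨k, rfl⟩ := ha
    have h1 : (y ^ k) ^ (d : ℕ) = 1 := by
      rw [← zpow_natCast, ← zpow_mul, mul_comm, zpow_mul, zpow_natCast,
        pow_orderOf_eq_one, one_zpow]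
    rw [hF, Finset.mem_filter]
    exact ⟨Finset.mem_univ _, h1⟩
  have heq : T = F :=
    Finset.eq_of_subset_of_card_le hsub (by rw [hTcard]; exact hle)
  have hx : x ∈ F := by
    rw [hF, Finset.mem_filter]
    exact ⟨Finset.mem_univ _, orderOf_dvd_iff_pow_eq_one.mp h⟩
  rw [← heq, hT, Set.mem_toFinset] at hx
  exact hx

/-- The number of distinct prime factors is at most the totient. -/
lemma aux_primeFactors_card_le_totient (L : ℕ) (hL : L ≠ 0) :
    L.primeFactors.card ≤ L.totient := by
  classical
  rw [Nat.totient_eq_prod_factorization hL]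
  have step1 : L.primeFactors.card ≤ 2 ^ (L.primeFactors.erase 2).card := by
    have h2 : L.primeFactors.card ≤ (L.primeFactors.erase 2).card + 1 := by
      by_cases h : 2 ∈ L.primeFactors
      · rw [Finset.card_erase_add_one h]
      · rw [Finset.erase_eq_of_notMem h]; omega
    exact h2.trans (Nat.succ_le_of_lt (Nat.lt_two_pow_self))
  have step2 : 2 ^ (L.primeFactors.erase 2).card ≤
      ∏ p ∈ L.primeFactors.erase 2, p ^ (L.factorization p - 1) * (p - 1) := by
    rw [← Finset.prod_const]
    apply Finset.prod_le_prod'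
    intro p hp
    have hpP : p ∈ L.primeFactors := Finset.mem_of_mem_erase hp
    have hpprime : p.Prime := Nat.prime_of_mem_primeFactors hpP
    have hp2 : p ≠ 2 := Finset.ne_of_mem_erase hp
    have hp3 : 3 ≤ p := by
      have := hpprime.two_le
      omega
    calc (2 : ℕ) ≤ p - 1 := by omega
    _ ≤ p ^ (L.factorization p - 1) * (p - 1) :=
      Nat.le_mul_of_pos_left _ (pow_pos hpprime.pos _)
  have step3 : ∏ p ∈ L.primeFactors.erase 2, p ^ (L.factorization p - 1) * (p - 1) ≤
      ∏ p ∈ L.primeFactors, p ^ (L.factorization p - 1) * (p - 1) := by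
    apply Finset.prod_le_prod_of_subset_of_one_le' (Finset.erase_subset _ _)
    intro p hpP _
    have hpprime : p.Prime := Nat.prime_of_mem_primeFactors hpP
    have : 0 < p ^ (L.factorization p - 1) * (p - 1) :=
      Nat.mul_pos (pow_pos hpprime.pos _) (by have := hpprime.two_le; omega)
    omega
  have step4 : (Nat.factorization L).prod (fun p k => p ^ (k - 1) * (p - 1)) =
      ∏ p ∈ L.primeFactors, p ^ (L.factorization p - 1) * (p - 1) := by
    rw [Finsupp.prod, Nat.support_factorization]
  rw [step4]
  exact step1.trans (step2.trans step3)

/-- A labelling of group elements by primes such that each prime dividing a divisor `L`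
of the group order is realized by some element of order `L`. -/
lemma aux_exists_pi (hcyc : IsCyclic G) :
    ∃ π : G → ℕ, ∀ L : ℕ, L ∣ Fintype.card G →
      ∀ p ∈ L.primeFactors, ∃ w : G, orderOf w = L ∧ π w = p := by
  classical
  haveI := hcyc
  have H : ∀ L : ℕ, ∃ f : G → ℕ, (L ∣ Fintype.card G →
      ∀ p ∈ L.primeFactors, ∃ w : G, orderOf w = L ∧ f w = p) := by
    intro L
    by_cases hL : L ∣ Fintype.card G
    · have hL0 : L ≠ 0 := by
        rintro rfl
        exact Fintype.card_ne_zero (Nat.eq_zero_of_zero_dvd hL)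
      set S : Finset G := Finset.filter (fun a : G => orderOf a = L) Finset.univ with hS
      have hcard : S.card = L.totient := IsCyclic.card_orderOf_eq_totient hL
      have hle : ((L.primeFactors : Set ℕ)).encard ≤ ((S : Finset G) : Set G).encard := by
        rw [Set.encard_coe_eq_coe_finsetCard, Set.encard_coe_eq_coe_finsetCard, hcard]
        exact_mod_cast aux_primeFactors_card_le_totient L hL0
      obtain ⟨ι, hmaps, hinj⟩ := Set.Finite.exists_injOn_of_encard_le (Set.toFinite _) hle
      refine ⟨fun w => if h : ∃ p ∈ L.primeFactors, ι p = w then h.choose else 0,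
        fun _ p hp => ?_⟩
      have hw : ι p ∈ S := by
        have := hmaps (by simpa using hp : p ∈ (L.primeFactors : Set ℕ))
        simpa using this
      have hex : ∃ q ∈ L.primeFactors, ι q = ι p := ⟨p, hp, rfl⟩
      refine ⟨ι p, by simpa [hS] using hw, ?_⟩
      show dite _ _ _ = _
      rw [dif_pos hex]
      obtain ⟨hq1, hq2⟩ := hex.choose_spec
      exact hinj (by simpa using hq1) (by simpa using hp) hq2
    · exact ⟨fun _ => 0, fun h => absurd h hL⟩
  choose f hf using H
  refine ⟨fun x => f (orderOf x) x, fun L hL p hp => ?_⟩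
  obtain ⟨w, hw, hfw⟩ := hf L hL p hp
  exact ⟨w, hw, by show f (orderOf w) w = p; rw [hw]; exact hfw⟩

/-- The basic edge-colour: compare the `π y`-adic valuations of the orders. -/
noncomputable def auxBit (π : G → ℕ) (x y : G) : Fin 2 :=
  if (orderOf x).factorization (π y) = (orderOf y).factorization (π y) then 1 else 0

/-- A symmetric colour function on ordered pairs. -/
noncomputable def auxF (π : G → ℕ) (x y : G) : Fin 2 :=
  if orderOf x < orderOf y then auxBit π x y
  else if orderOf y < orderOf x then auxBit π y x else 0

lemma auxF_symm (π : G → ℕ) (x y : G) : auxF π x y = auxF π y x := by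
  unfold auxF
  rcases lt_trichotomy (orderOf x) (orderOf y) with h | h | h
  · rw [if_pos h, if_neg (lt_asymm h), if_pos h]
  · rw [if_neg (by omega), if_neg (by omega), if_neg (by omega), if_neg (by omega)]
  · rw [if_neg (lt_asymm h), if_pos h, if_pos h]

/-- The 2-colouring of the power graph edges. -/
noncomputable def auxZeta (π : G → ℕ) : Sym2 G → Fin 2 :=
  Sym2.lift ⟨auxF π, auxF_symm π⟩

lemma auxZeta_mk (π : G → ℕ) (x y : G) : auxZeta π s(x, y) = auxF π x y := rfl

/-- The power graph of a finite cyclic group admits a rainbow 2-colouring. -/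
lemma aux_exists_rainbow (hcyc : IsCyclic G) :
    ∃ ζ : Sym2 G → Fin 2, IsRainbowColoring (powerGraph G) ζ := by
  classical
  obtain ⟨π, hπ⟩ := aux_exists_pi hcyc
  refine ⟨auxZeta π, fun u v => ?_⟩
  by_cases huv : u = v
  · subst huv
    exact ⟨SimpleGraph.Walk.nil, SimpleGraph.Walk.IsPath.nil, by simp⟩
  by_cases hadj : (powerGraph G).Adj u v
  · refine ⟨SimpleGraph.Walk.cons hadj SimpleGraph.Walk.nil, ?_, by simp⟩
    simp [SimpleGraph.Walk.cons_isPath_iff, huv]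
  · have hd10 : orderOf u ≠ 0 := (orderOf_pos u).ne'
    have hd20 : orderOf v ≠ 0 := (orderOf_pos v).ne'
    have h12 : ¬ orderOf u ∣ orderOf v := fun h =>
      hadj ⟨huv, Or.inl (aux_mem_zpowers_of_orderOf_dvd hcyc h)⟩
    have h21 : ¬ orderOf v ∣ orderOf u := fun h =>
      hadj ⟨huv, Or.inr (aux_mem_zpowers_of_orderOf_dvd hcyc h)⟩
    obtain ⟨p, hp⟩ : ∃ p, (orderOf v).factorization p < (orderOf u).factorization p := by
      by_contra hcon
      push_neg at hcon
      exact h12 ((Nat.factorization_le_iff_dvd hd10 hd20).mp (Finsupp.le_def.mpr hcon))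
    set L := Nat.lcm (orderOf u) (orderOf v) with hLdef
    have hLn : L ∣ Fintype.card G := Nat.lcm_dvd orderOf_dvd_card orderOf_dvd_card
    have hL0 : L ≠ 0 := Nat.lcm_ne_zero hd10 hd20
    have h1L : orderOf u ∣ L := Nat.dvd_lcm_left _ _
    have h2L : orderOf v ∣ L := Nat.dvd_lcm_right _ _
    have hL1 : orderOf u ≠ L := fun h => h21 (by rw [h]; exact h2L)
    have hL2 : orderOf v ≠ L := fun h => h12 (by rw [h]; exact h1L)
    have hfacL : L.factorization = (orderOf u).factorization ⊔ (orderOf v).factorization :=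
      Nat.factorization_lcm hd10 hd20
    have hvalL : L.factorization p = (orderOf u).factorization p := by
      rw [hfacL, Finsupp.sup_apply]
      exact sup_eq_left.mpr hp.le
    have hpL : p ∈ L.primeFactors := by
      have hpu : p ∈ (orderOf u).primeFactors := by
        rw [← Nat.support_factorization]
        exact Finsupp.mem_support_iff.mpr (by omega)
      exact Nat.mem_primeFactors.mpr ⟨Nat.prime_of_mem_primeFactors hpu,
        (Nat.dvd_of_mem_primeFactors hpu).trans h1L, hL0⟩
    obtain ⟨w, hwL, hwp⟩ := hπ L hLn p hpL
    have hLpos : 0 < L := Nat.pos_of_ne_zero hL0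
    have hu_lt : orderOf u < orderOf w := by
      rw [hwL]; exact lt_of_le_of_ne (Nat.le_of_dvd hLpos h1L) hL1
    have hv_lt : orderOf v < orderOf w := by
      rw [hwL]; exact lt_of_le_of_ne (Nat.le_of_dvd hLpos h2L) hL2
    have hwu : u ≠ w := fun h => by rw [h] at hu_lt; exact lt_irrefl _ hu_lt
    have hwv : w ≠ v := fun h => by rw [← h] at hv_lt; exact lt_irrefl _ hv_lt
    have adj1 : (powerGraph G).Adj u w :=
      ⟨hwu, Or.inl (aux_mem_zpowers_of_orderOf_dvd hcyc (by rw [hwL]; exact h1L))⟩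
    have adj2 : (powerGraph G).Adj w v :=
      ⟨hwv, Or.inr (aux_mem_zpowers_of_orderOf_dvd hcyc (by rw [hwL]; exact h2L))⟩
    refine ⟨SimpleGraph.Walk.cons adj1 (SimpleGraph.Walk.cons adj2 SimpleGraph.Walk.nil),
      ?_, ?_⟩
    · simp [SimpleGraph.Walk.cons_isPath_iff, huv, hwu, hwv]
    · have e1 : auxZeta π s(u, w) = 1 := by
        rw [auxZeta_mk]
        unfold auxF
        rw [if_pos hu_lt]
        unfold auxBit
        rw [hwp, hwL, hvalL]
        rw [if_pos rfl]
      have e2 : auxZeta π s(w, v) = 0 := by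
        rw [auxZeta_mk]
        unfold auxF
        rw [if_neg (by omega), if_pos hv_lt]
        unfold auxBit
        rw [hwp, hwL, hvalL]
        rw [if_neg (by omega)]
      simp only [SimpleGraph.Walk.edges_cons, SimpleGraph.Walk.edges_nil, List.map_cons,
        List.map_nil, e1, e2]
      decide

end RainbowAux

theorem rc_powerGraph_eq_two_of_cyclic_not_primePow
    (G : Type*) [Group G] [Fintype G] (hcyc : IsCyclic G)
    (hpp : ¬ ∃ p k : ℕ, p.Prime ∧ Fintype.card G = p ^ k) :
    rainbowConnection (powerGraph G) = 2 := by
  classical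
  unfold rainbowConnection
  set S := {k : ℕ | ∃ ζ : Sym2 G → Fin k, IsRainbowColoring (powerGraph G) ζ} with hSdef
  obtain ⟨ζ₂, hζ₂⟩ := aux_exists_rainbow hcyc
  have h2 : (2 : ℕ) ∈ S := ⟨ζ₂, hζ₂⟩
  have hne : S.Nonempty := ⟨2, h2⟩
  -- a non-adjacent pair of vertices
  have hn1 : Fintype.card G ≠ 1 := fun h => hpp ⟨2, 0, Nat.prime_two, by rw [h, pow_zero]⟩
  obtain ⟨p, q, hp, hq, hpq, hpn, hqn⟩ : ∃ p q : ℕ, p.Prime ∧ q.Prime ∧ p ≠ q ∧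
      p ∣ Fintype.card G ∧ q ∣ Fintype.card G := by
    by_contra hcon
    push_neg at hcon
    have hpmf : (Fintype.card G).minFac.Prime := Nat.minFac_prime hn1
    have hpow : Fintype.card G =
        (Fintype.card G).minFac ^ (Fintype.card G).primeFactorsList.length := by
      apply Nat.eq_prime_pow_of_unique_prime_dvd Fintype.card_ne_zero
      intro d hd hdn
      by_contra hne'
      exact hcon d (Fintype.card G).minFac hd hpmf hne' hdn (Nat.minFac_dvd _)
    exact hpp ⟨_, _, hpmf, hpow⟩
  haveI := Fact.mk hp
  haveI := Fact.mk hq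
  obtain ⟨a, ha⟩ := exists_prime_orderOf_dvd_card p hpn
  obtain ⟨b, hb⟩ := exists_prime_orderOf_dvd_card q hqn
  have hab : a ≠ b := fun h => hpq (by rw [← ha, ← hb, h])
  have hnadj : ¬ (powerGraph G).Adj a b := by
    rintro ⟨-, h | h⟩
    · have hdvd := orderOf_dvd_of_mem_zpowers h
      rw [ha, hb] at hdvd
      exact hpq ((Nat.prime_dvd_prime_iff_eq hp hq).mp hdvd)
    · have hdvd := orderOf_dvd_of_mem_zpowers h
      rw [ha, hb] at hdvd
      exact hpq (((Nat.prime_dvd_prime_iff_eq hq hp).mp hdvd).symm)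
  have h0 : (0 : ℕ) ∉ S := by
    rintro ⟨ζ, -⟩
    exact (ζ s((1 : G), (1 : G))).elim0
  have h1 : (1 : ℕ) ∉ S := by
    rintro ⟨ζ, hζ⟩
    obtain ⟨pa, hpath, hnod⟩ := hζ a b
    have hlen : pa.edges.length ≤ 1 := by
      have := hnod.length_le_card
      simpa using this
    cases pa with
    | nil => exact hab rfl
    | cons h qw =>
      cases qw with
      | nil => exact hnadj h
      | cons h' qw' =>
        simp only [SimpleGraph.Walk.edges_cons, List.length_cons] at hlen
        omega
  refine le_antisymm (Nat.sInf_le h2) ?_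
  have hmem := Nat.sInf_mem hne
  have hS0 : sInf S ≠ 0 := fun h => h0 (h ▸ hmem)
  have hS1 : sInf S ≠ 1 := fun h => h1 (h ▸ hmem)
  omega
end

section
/- If G is a finite noncyclic group with no maximal involutions, then the rainbow connection number of the power graph Γ_G equals 2 or 3. -/
section Aux
variable {G : Type*} [Group G] [Fintype G]

lemma pg_adj_one (x : G) (hx : x ≠ 1) : (powerGraph G).Adj x 1 :=
  ⟨hx, Or.inr (Subgroup.one_mem _)⟩

lemma zpowers_eq_of_mem_of_le {g x : G} (hm : x ∈ Subgroup.zpowers g)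
    (ho : orderOf g ≤ orderOf x) : Subgroup.zpowers g = Subgroup.zpowers x := by
  have hle : Subgroup.zpowers x ≤ Subgroup.zpowers g := by
    rw [Subgroup.zpowers_le]; exact hm
  exact (Subgroup.eq_of_le_of_card_ge hle
    (by rw [Nat.card_zpowers, Nat.card_zpowers]; exact ho)).symm

lemma cyclic_of_complete (h : ∀ x y : G, x ≠ y → (powerGraph G).Adj x y) :
    IsCyclic G := by
  obtain ⟨g, -, hg⟩ := Finset.exists_max_image (Finset.univ : Finset G) orderOf
    ⟨1, Finset.mem_univ 1⟩
  have hgen : ∀ x : G, x ∈ Subgroup.zpowers g := by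
    intro x
    rcases eq_or_ne x g with rfl | hne
    · exact Subgroup.mem_zpowers x
    rcases (h x g hne).2 with hx | hx
    · exact hx
    · have hq := zpowers_eq_of_mem_of_le hx (hg x (Finset.mem_univ x))
      rw [← hq]; exact Subgroup.mem_zpowers x
  exact ⟨⟨g, hgen⟩⟩

lemma exists_partner (hno : ∀ x : G, ¬ IsMaximalInvolution x) (x : G)
    (hx : orderOf x = 2) :
    ∃ g : G, x ∈ Subgroup.zpowers g ∧ g ≠ x ∧ g ≠ 1 ∧ orderOf g ≠ 2 := by
  have hx1 : x ≠ 1 := by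
    intro h; rw [h, orderOf_one] at hx; omega
  have h := hno x
  rw [IsMaximalInvolution] at h
  push_neg at h
  obtain ⟨g, hm, hne⟩ := h hx
  refine ⟨g, hm, ?_, ?_, ?_⟩
  · rintro rfl; exact hne rfl
  · rintro rfl
    rw [Subgroup.zpowers_one_eq_bot, Subgroup.mem_bot] at hm
    exact hx1 hm
  · intro hg
    exact hne (zpowers_eq_of_mem_of_le hm (by omega))

/-- A partner of an involution, for groups with no maximal involutions. -/
noncomputable def pgF (hno : ∀ x : G, ¬ IsMaximalInvolution x) (x : G) : G :=
  if hx : orderOf x = 2 then Classical.choose (exists_partner hno x hx) else 1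

lemma pgF_spec (hno : ∀ x : G, ¬ IsMaximalInvolution x) (x : G)
    (hx : orderOf x = 2) :
    x ∈ Subgroup.zpowers (pgF hno x) ∧ pgF hno x ≠ x ∧ pgF hno x ≠ 1 ∧
      orderOf (pgF hno x) ≠ 2 := by
  rw [pgF, dif_pos hx]
  exact Classical.choose_spec (exists_partner hno x hx)

/-- A base 2-coloring distinguishing `x` from `x⁻¹`. -/
noncomputable def pgB (x : G) : Fin 2 :=
  if (Fintype.equivFin G x : ℕ) ≤ (Fintype.equivFin G x⁻¹ : ℕ) then 0 else 1

lemma pgB_inv_ne (x : G) (hx : x ≠ x⁻¹) : pgB x⁻¹ ≠ pgB x := by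
  have hne : (Fintype.equivFin G x : ℕ) ≠ (Fintype.equivFin G x⁻¹ : ℕ) := by
    intro h
    exact hx ((Fintype.equivFin G).injective (Fin.val_injective h))
  rw [pgB, pgB, inv_inv]
  split_ifs with h1 h2 h2 <;> simp_all <;> omega

/-- The spoke 2-coloring. -/
noncomputable def pgSigma (hno : ∀ x : G, ¬ IsMaximalInvolution x) (x : G) : Fin 2 :=
  if orderOf x = 2 then (if pgB (pgF hno x) = 0 then 1 else 0) else pgB x

lemma ne_inv_of_orderOf (x : G) (h1 : x ≠ 1) (h2 : orderOf x ≠ 2) : x ≠ x⁻¹ := by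
  intro h
  have hsq : x ^ 2 = 1 := by
    rw [pow_two]; nth_rewrite 2 [h]; exact mul_inv_cancel x
  have hd := orderOf_dvd_of_pow_eq_one hsq
  rcases (Nat.prime_two.eq_one_or_self_of_dvd _ hd) with h' | h'
  · exact h1 (orderOf_eq_one_iff.mp h')
  · exact h2 h'

/-- The neighbor used for detour paths. -/
noncomputable def pgN (hno : ∀ x : G, ¬ IsMaximalInvolution x) (x : G) : G :=
  if orderOf x = 2 then pgF hno x else x⁻¹

lemma pgN_spec (hno : ∀ x : G, ¬ IsMaximalInvolution x) (x : G) (hx : x ≠ 1) :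
    pgN hno x ≠ 1 ∧ pgN hno x ≠ x ∧ (powerGraph G).Adj x (pgN hno x) ∧
      pgSigma hno (pgN hno x) ≠ pgSigma hno x := by
  have htwo : ∀ a : Fin 2, a = 0 ∨ a = 1 := by decide
  by_cases h2 : orderOf x = 2
  · obtain ⟨hm, hne, hne1, ho⟩ := pgF_spec hno x h2
    rw [pgN, if_pos h2]
    refine ⟨hne1, hne, ⟨fun h => hne h.symm, Or.inl hm⟩, ?_⟩
    rw [pgSigma, pgSigma, if_neg ho, if_pos h2]
    rcases htwo (pgB (pgF hno x)) with h | h <;> simp [h]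
  · have hxi := ne_inv_of_orderOf x hx h2
    rw [pgN, if_neg h2]
    have hoi : orderOf x⁻¹ ≠ 2 := by rwa [orderOf_inv]
    refine ⟨inv_ne_one.mpr hx, fun h => hxi h.symm,
      ⟨hxi, Or.inr (Subgroup.inv_mem _ (Subgroup.mem_zpowers x))⟩, ?_⟩
    rw [pgSigma, pgSigma, if_neg hoi, if_neg h2]
    exact pgB_inv_ne x hxi

end Aux

theorem rc_powerGraph_eq_two_or_three_of_noncyclic
    (G : Type*) [Group G] [Fintype G] (hnc : ¬ IsCyclic G)
    (hno : ∀ x : G, ¬ IsMaximalInvolution x) :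
    rainbowConnection (powerGraph G) = 2 ∨ rainbowConnection (powerGraph G) = 3 := by
  classical
  set S := {k : ℕ | ∃ ζ : Sym2 G → Fin k, IsRainbowColoring (powerGraph G) ζ} with hS
  -- lower bound: every member of S is at least 2
  have hlow : ∀ k ∈ S, 2 ≤ k := by
    intro k hk
    obtain ⟨ζ, hζ⟩ := hk
    by_contra hlt
    push_neg at hlt
    interval_cases k
    · exact (ζ s(1, 1)).elim0
    · -- k = 1 : the graph would be complete, hence G cyclic
      apply hnc
      apply cyclic_of_complete
      intro x y hxy
      obtain ⟨p, hp, hnd⟩ := hζ x y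
      have hlen : p.length ≤ 1 := by
        have h1 : (p.edges.map ζ).length ≤ Fintype.card (Fin 1) :=
          List.Nodup.length_le_card hnd
        simpa using h1
      have hne0 : p.length ≠ 0 := fun h => hxy (SimpleGraph.Walk.eq_of_length_eq_zero h)
      exact p.adj_of_length_eq_one (by omega)
  -- the 3-coloring
  let σ : G → Fin 2 := pgSigma hno
  let cast2 : Fin 2 → Fin 3 := Fin.castLE (by norm_num)
  let ζ : Sym2 G → Fin 3 := Sym2.lift ⟨fun a b =>
    if a = 1 then cast2 (σ b) else if b = 1 then cast2 (σ a) else 2, by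
      intro a b
      by_cases ha : a = 1 <;> by_cases hb : b = 1 <;> simp [ha, hb]⟩
  have hζ1 : ∀ x : G, x ≠ 1 → ζ s(x, 1) = cast2 (σ x) := by
    intro x hx; simp [ζ, Sym2.lift_mk, hx]
  have hζ1' : ∀ x : G, x ≠ 1 → ζ s(1, x) = cast2 (σ x) := by
    intro x hx; simp [ζ, Sym2.lift_mk, hx]
  have hζ2 : ∀ x y : G, x ≠ 1 → y ≠ 1 → ζ s(x, y) = 2 := by
    intro x y hx hy; simp [ζ, Sym2.lift_mk, hx, hy]
  have hcastne : ∀ a b : Fin 2, a ≠ b → cast2 a ≠ cast2 b := by decide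
  have hcast2 : ∀ a : Fin 2, (2 : Fin 3) ≠ cast2 a := by decide
  have h3 : 3 ∈ S := by
    refine ⟨ζ, fun u v => ?_⟩
    rcases eq_or_ne u v with rfl | huv
    · exact ⟨SimpleGraph.Walk.nil, SimpleGraph.Walk.IsPath.nil, by simp⟩
    rcases eq_or_ne u 1 with rfl | hu
    · have hv : v ≠ 1 := fun h => huv h.symm
      exact ⟨SimpleGraph.Walk.cons (pg_adj_one v hv).symm SimpleGraph.Walk.nil,
        by simp [SimpleGraph.Walk.isPath_def, huv], by simp⟩
    rcases eq_or_ne v 1 with rfl | hv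
    · exact ⟨SimpleGraph.Walk.cons (pg_adj_one u hu) SimpleGraph.Walk.nil,
        by simp [SimpleGraph.Walk.isPath_def, huv], by simp⟩
    by_cases hadj : (powerGraph G).Adj u v
    · exact ⟨SimpleGraph.Walk.cons hadj SimpleGraph.Walk.nil,
        by simp [SimpleGraph.Walk.isPath_def, huv], by simp⟩
    by_cases hσ : σ u = σ v
    · -- detour path u — N u — 1 — v
      obtain ⟨hN1, hNu, hNadj, hNσ⟩ := pgN_spec hno u hu
      have hNv : pgN hno u ≠ v := by
        rintro rfl; exact hadj hNadj
      refine ⟨SimpleGraph.Walk.cons hNadj (SimpleGraph.Walk.cons (pg_adj_one _ hN1)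
        (SimpleGraph.Walk.cons (pg_adj_one v hv).symm SimpleGraph.Walk.nil)), ?_, ?_⟩
      · have h1 : u ≠ pgN hno u := hNu.symm
        have h2 : (1 : G) ≠ v := hv.symm
        simp [SimpleGraph.Walk.isPath_def, hu, hv, huv, hN1, hNv, h1, h2]
      · have e1 : ζ s(u, pgN hno u) = 2 := hζ2 _ _ hu hN1
        have e2 : ζ s(pgN hno u, 1) = cast2 (σ (pgN hno u)) := hζ1 _ hN1
        have e3 : ζ s(1, v) = cast2 (σ v) := hζ1' _ hv
        simp only [SimpleGraph.Walk.edges_cons, SimpleGraph.Walk.edges_nil,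
          List.map_cons, List.map_nil, e1, e2, e3]
        have d1 : (2 : Fin 3) ≠ cast2 (σ (pgN hno u)) := hcast2 _
        have d2 : (2 : Fin 3) ≠ cast2 (σ v) := hcast2 _
        have d3 : cast2 (σ (pgN hno u)) ≠ cast2 (σ v) :=
          hcastne _ _ (by rw [← hσ]; exact hNσ)
        simp [List.nodup_cons, d1, d2, d3]
    · -- path u — 1 — v
      refine ⟨SimpleGraph.Walk.cons (pg_adj_one u hu)
        (SimpleGraph.Walk.cons (pg_adj_one v hv).symm SimpleGraph.Walk.nil), ?_, ?_⟩
      · have h2 : (1 : G) ≠ v := hv.symm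
        simp [SimpleGraph.Walk.isPath_def, hu, huv, h2]
      · have e1 : ζ s(u, 1) = cast2 (σ u) := hζ1 _ hu
        have e2 : ζ s(1, v) = cast2 (σ v) := hζ1' _ hv
        simp only [SimpleGraph.Walk.edges_cons, SimpleGraph.Walk.edges_nil,
          List.map_cons, List.map_nil, e1, e2]
        have d : cast2 (σ u) ≠ cast2 (σ v) := hcastne _ _ hσ
        simp [List.nodup_cons, d]
  have hne : S.Nonempty := ⟨3, h3⟩
  have hmem := Nat.sInf_mem hne
  have hle := Nat.sInf_le h3
  have h2 := hlow _ hmem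
  rw [rainbowConnection, ← hS]
  omega
end
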